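/- arXiv:2304.02393 — 4 statements merged into one kernel-verified Lean document; each statement's English description precedes it below -/
import Mathlib

section
/- Let G = (V, E) be a finite undirected simple graph on N vertices with Laplacian L := L(G), let p ∈ [0, 1], and let (α_e)_{e ∈ E} be mutually independent Bernoulli(p) {0,1}-random variables; define the random Laplacian L̃ := Σ_{e ∈ E} α_e · L_e with L_e the Laplacian of the single-edge graph. Let Q be a symmetric n×n real matrix and B^d, B^c, B^p ∈ ℝ^{n×m}. Then E[(I_N ⊗ B^d + L̃ ⊗ B^c + L ⊗ B^p)ᵀ (I_N ⊗ Q) (I_N ⊗ B^d + L̃ ⊗ B^c + L ⊗ B^p)] = (I_N ⊗ B^d + L ⊗ (p·B^c + B^p))ᵀ (I_N ⊗ Q) (I_N ⊗ B^d + L ⊗ (p·B^c + B^p)) + 2p(1−p) · L ⊗ (B^{cT} Q B^c), where ⊗ denotes the Kronecker product and E is the entrywise expectation. -/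
open MeasureTheory ProbabilityTheory Matrix Kronecker

/-- The Laplacian of the graph on `V` containing the single undirected edge `e`: diagonal entries
are `1` at the two endpoints of `e` (provided `e` is not a loop), the off-diagonal entries
corresponding to `e` are `-1`, and all other entries vanish. -/
def edgeLaplacian {V : Type*} [DecidableEq V] (e : Sym2 V) : Matrix V V ℝ :=
  Matrix.of fun i j =>
    if i = j then (if i ∈ e ∧ ¬e.IsDiag then 1 else 0)
    else (if s(i, j) = e then -1 else 0)

lemma edgeLaplacian_isSymm {V : Type*} [DecidableEq V] (e : Sym2 V) :
    (edgeLaplacian e).IsSymm := by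
  ext i j
  simp only [edgeLaplacian, transpose_apply, of_apply]
  by_cases h : i = j
  · simp [h]
  · simp [h, Ne.symm h, Sym2.eq_swap]

lemma lapMatrix_eq_sum {V : Type*} [Fintype V] [DecidableEq V]
    (G : SimpleGraph V) [DecidableRel G.Adj] :
    G.lapMatrix ℝ = ∑ e ∈ G.edgeFinset, edgeLaplacian e := by
  ext i j
  rw [Matrix.sum_apply]
  simp only [edgeLaplacian, of_apply, SimpleGraph.lapMatrix, Matrix.sub_apply,
    SimpleGraph.degMatrix, diagonal_apply, SimpleGraph.adjMatrix_apply]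
  by_cases h : i = j
  · subst h
    simp only [if_pos rfl, if_true, G.irrefl, if_false, sub_zero]
    have h1 : ∀ e ∈ G.edgeFinset, (if i ∈ e ∧ ¬e.IsDiag then (1:ℝ) else 0)
        = if i ∈ e then 1 else 0 := by
      intro e he
      have := (SimpleGraph.not_isDiag_of_mem_edgeSet G (SimpleGraph.mem_edgeFinset.mp he))
      simp [this]
    rw [Finset.sum_congr rfl h1]
    rw [Finset.sum_boole, ← SimpleGraph.incidenceFinset_eq_filter,
      SimpleGraph.card_incidenceFinset_eq_degree]
  · simp only [if_neg h, zero_sub]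
    have : ∀ x ∈ G.edgeFinset, (if s(i,j) = x then (-1:ℝ) else 0)
        = if x = s(i,j) then -1 else 0 := by
      intro x _; simp [eq_comm]
    rw [Finset.sum_congr rfl this, Finset.sum_ite_eq' G.edgeFinset s(i,j) (fun _ => (-1:ℝ))]
    by_cases hadj : G.Adj i j
    · simp [SimpleGraph.mem_edgeFinset, hadj]
    · simp [SimpleGraph.mem_edgeFinset, SimpleGraph.mem_edgeSet, hadj]

lemma edgeLaplacian_eq_vecMulVec {V : Type*} [DecidableEq V] {u v : V} (huv : u ≠ v) :
    edgeLaplacian s(u, v) =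
      vecMulVec (fun w => (if w = u then (1:ℝ) else 0) - (if w = v then 1 else 0))
        (fun w => (if w = u then (1:ℝ) else 0) - (if w = v then 1 else 0)) := by
  ext i j
  simp only [edgeLaplacian, of_apply, vecMulVec_apply, Sym2.mem_iff, Sym2.isDiag_iff_proj_eq,
    Sym2.eq_iff]
  by_cases h1 : i = u <;> by_cases h2 : i = v <;> by_cases h3 : j = u <;> by_cases h4 : j = v <;>
    simp_all [eq_comm]

lemma edgeLaplacian_mul_self {V : Type*} [Fintype V] [DecidableEq V] {e : Sym2 V}
    (he : ¬ e.IsDiag) :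
    edgeLaplacian e * edgeLaplacian e = (2:ℝ) • edgeLaplacian e := by
  induction e using Sym2.ind with
  | _ u v =>
    have huv : u ≠ v := by simpa using he
    set x : V → ℝ := fun w => (if w = u then (1:ℝ) else 0) - (if w = v then 1 else 0) with hx
    rw [edgeLaplacian_eq_vecMulVec huv]
    have hsum : ∑ k, x k * x k = 2 := by
      have h2 : ∀ k, x k * x k = (if k = u then 1 else 0) + (if k = v then 1 else 0) := by
        intro k
        by_cases h1 : k = u
        · subst h1; simp [hx, huv]
        · by_cases h2 : k = v
          · subst h2; simp [hx, h1, Ne.symm huv]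
          · simp [hx, h1, h2]
      simp only [h2]
      rw [Finset.sum_add_distrib, Finset.sum_ite_eq' Finset.univ u (fun _ => (1:ℝ)),
        Finset.sum_ite_eq' Finset.univ v (fun _ => (1:ℝ))]
      simp; norm_num
    ext i j
    simp only [mul_apply, vecMulVec_apply, Matrix.smul_apply, smul_eq_mul]
    calc ∑ k, (x i * x k) * (x k * x j) = (∑ k, x k * x k) * (x i * x j) := by
          rw [Finset.sum_mul]; congr 1; ext k; ring
      _ = 2 * (x i * x j) := by rw [hsum]

lemma integrable_of01 {Ω : Type*} [MeasurableSpace Ω] {μ : Measure Ω} [IsProbabilityMeasure μ]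
    {f : Ω → ℝ} (hm : Measurable f) (h : ∀ ω, f ω = 0 ∨ f ω = 1) :
    Integrable f μ := by
  refine Integrable.mono' (integrable_const 1) hm.aestronglyMeasurable ?_
  filter_upwards with ω
  rcases h ω with h' | h' <;> simp [h']

lemma integral_of01 {Ω : Type*} [MeasurableSpace Ω] {μ : Measure Ω}
    {f : Ω → ℝ} (hm : Measurable f) (h : ∀ ω, f ω = 0 ∨ f ω = 1)
    {p : ℝ} (hp : 0 ≤ p) (hμ : μ {ω | f ω = 1} = ENNReal.ofReal p) :
    ∫ ω, f ω ∂μ = p := by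
  have hfi : f = Set.indicator {ω | f ω = 1} (fun _ => (1:ℝ)) := by
    funext ω
    rcases h ω with h' | h'
    · rw [h']
      refine (Set.indicator_apply_eq_zero.mpr ?_).symm
      intro hmem
      simp only [Set.mem_setOf_eq] at hmem
      rw [h'] at hmem; norm_num at hmem
    · rw [h']; exact (Set.indicator_of_mem (show ω ∈ {ω | f ω = 1} from h') (fun _ => (1:ℝ))).symm
  have hms : MeasurableSet {ω | f ω = 1} := hm (measurableSet_singleton 1)
  rw [hfi, integral_indicator_const (1:ℝ) hms, measureReal_def, hμ, ENNReal.toReal_ofReal hp, smul_eq_mul, mul_one]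

lemma quad_expand {β γ ι : Type*} [Fintype β] (s : Finset ι)
    (M : Matrix β γ ℝ) (C : Matrix β β ℝ) (K : ι → Matrix β γ ℝ) (a : ι → ℝ) :
    (M + ∑ e ∈ s, a e • K e)ᵀ * C * (M + ∑ e ∈ s, a e • K e) =
      Mᵀ * C * M + ∑ e ∈ s, a e • (Mᵀ * C * K e + (K e)ᵀ * C * M)
        + ∑ e ∈ s, ∑ f ∈ s, (a e * a f) • ((K e)ᵀ * C * K f) := by
  rw [transpose_add, Matrix.add_mul, Matrix.add_mul, Matrix.mul_add, Matrix.mul_add]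
  have h1 : Mᵀ * C * (∑ e ∈ s, a e • K e) = ∑ e ∈ s, a e • (Mᵀ * C * K e) := by
    rw [Matrix.mul_sum]
    exact Finset.sum_congr rfl fun e _ => (Matrix.mul_smul _ _ _)
  have h2 : (∑ e ∈ s, a e • K e)ᵀ * C * M = ∑ e ∈ s, a e • ((K e)ᵀ * C * M) := by
    rw [transpose_sum, Matrix.sum_mul, Matrix.sum_mul]
    exact Finset.sum_congr rfl fun e _ => by rw [transpose_smul, Matrix.smul_mul, Matrix.smul_mul]
  have h3 : (∑ e ∈ s, a e • K e)ᵀ * C * (∑ f ∈ s, a f • K f) =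
      ∑ e ∈ s, ∑ f ∈ s, (a e * a f) • ((K e)ᵀ * C * K f) := by
    rw [transpose_sum, Matrix.sum_mul, Matrix.sum_mul]
    refine Finset.sum_congr rfl fun e _ => ?_
    rw [Matrix.mul_sum]
    refine Finset.sum_congr rfl fun f _ => ?_
    rw [transpose_smul, Matrix.smul_mul, Matrix.smul_mul, Matrix.mul_smul, smul_smul]
  rw [h1, h2, h3]
  simp only [smul_add, Finset.sum_add_distrib]
  abel

lemma sum_kronecker' {V : Type*} {n m : Type*} {ι : Type*} (s : Finset ι)
    (A : ι → Matrix V V ℝ) (B : Matrix n m ℝ) :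
    (∑ e ∈ s, A e) ⊗ₖ B = ∑ e ∈ s, (A e ⊗ₖ B) := by
  ext ⟨i, x⟩ ⟨j, y⟩
  simp [Matrix.sum_apply, Finset.sum_mul]

lemma smul_sum_kronecker' {V : Type*} {n m : Type*} {ι : Type*} (s : Finset ι)
    (a : ι → ℝ) (A : ι → Matrix V V ℝ) (B : Matrix n m ℝ) :
    (∑ e ∈ s, a e • A e) ⊗ₖ B = ∑ e ∈ s, a e • (A e ⊗ₖ B) := by
  ext ⟨i, x⟩ ⟨j, y⟩
  simp [Matrix.sum_apply, Finset.sum_mul, mul_assoc]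


/-- Let `G` be a finite undirected simple graph with Laplacian `L`, and let
`(α_e)` be mutually independent Bernoulli(`p`) `{0,1}`-random variables indexed by the edges of
`G`, yielding the random Laplacian `L̃ = Σ_{e ∈ E(G)} α_e • L_e`.  For a symmetric `Q` and
matrices `B^d, B^c, B^p`, the entrywise expectation of
`(I ⊗ B^d + L̃ ⊗ B^c + L ⊗ B^p)ᵀ (I ⊗ Q) (I ⊗ B^d + L̃ ⊗ B^c + L ⊗ B^p)` equals
`(I ⊗ B^d + L ⊗ (p B^c + B^p))ᵀ (I ⊗ Q) (I ⊗ B^d + L ⊗ (p B^c + B^p))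
  + 2p(1-p) • L ⊗ (B^{cᵀ} Q B^c)`. -/
theorem integral_kronecker_quadratic_form
    {V : Type*} [Fintype V] [DecidableEq V]
    (G : SimpleGraph V) [DecidableRel G.Adj]
    {Ω : Type*} [MeasurableSpace Ω] (μ : Measure Ω) [IsProbabilityMeasure μ]
    (p : ℝ) (hp : p ∈ Set.Icc (0 : ℝ) 1)
    (α : Sym2 V → Ω → ℝ)
    (hmeas : ∀ e, Measurable (α e))
    (h01 : ∀ e ∈ G.edgeSet, ∀ ω, α e ω = 0 ∨ α e ω = 1)
    (hbern : ∀ e ∈ G.edgeSet, μ {ω | α e ω = 1} = ENNReal.ofReal p)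
    (hindep : iIndepFun (fun e : G.edgeSet => α e.1) μ)
    {n m : ℕ} (Q : Matrix (Fin n) (Fin n) ℝ) (hQsymm : Q.IsSymm)
    (Bd Bc Bp : Matrix (Fin n) (Fin m) ℝ) :
    (Matrix.of fun i j =>
        ∫ ω,
          (((1 : Matrix V V ℝ) ⊗ₖ Bd +
              (∑ e ∈ G.edgeFinset, α e ω • edgeLaplacian e) ⊗ₖ Bc +
              G.lapMatrix ℝ ⊗ₖ Bp)ᵀ *
            ((1 : Matrix V V ℝ) ⊗ₖ Q) *
            ((1 : Matrix V V ℝ) ⊗ₖ Bd +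
              (∑ e ∈ G.edgeFinset, α e ω • edgeLaplacian e) ⊗ₖ Bc +
              G.lapMatrix ℝ ⊗ₖ Bp)) i j ∂μ) =
      ((1 : Matrix V V ℝ) ⊗ₖ Bd + G.lapMatrix ℝ ⊗ₖ (p • Bc + Bp))ᵀ *
          ((1 : Matrix V V ℝ) ⊗ₖ Q) *
          ((1 : Matrix V V ℝ) ⊗ₖ Bd + G.lapMatrix ℝ ⊗ₖ (p • Bc + Bp)) +
        (2 * p * (1 - p)) • (G.lapMatrix ℝ ⊗ₖ (Bcᵀ * Q * Bc)) := by
  classical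
  obtain ⟨hp0, hp1⟩ := hp
  -- abbreviations
  set C : Matrix (V × Fin n) (V × Fin n) ℝ := (1 : Matrix V V ℝ) ⊗ₖ Q with hC
  set M : Matrix (V × Fin n) (V × Fin m) ℝ :=
    (1 : Matrix V V ℝ) ⊗ₖ Bd + G.lapMatrix ℝ ⊗ₖ Bp with hM
  set K : Sym2 V → Matrix (V × Fin n) (V × Fin m) ℝ :=
    fun e => edgeLaplacian e ⊗ₖ Bc with hK
  -- rewrite the integrand
  have hMwrap : ∀ ω : Ω, (1 : Matrix V V ℝ) ⊗ₖ Bd +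
      (∑ e ∈ G.edgeFinset, α e ω • edgeLaplacian e) ⊗ₖ Bc + G.lapMatrix ℝ ⊗ₖ Bp
      = M + ∑ e ∈ G.edgeFinset, α e ω • K e := by
    intro ω
    rw [smul_sum_kronecker', hM, add_right_comm]
  simp only [hMwrap, quad_expand]
  -- integrability and expectations
  have hI1 : ∀ e ∈ G.edgeFinset, Integrable (α e) μ := fun e he =>
    integrable_of01 (hmeas e) (h01 e (SimpleGraph.mem_edgeFinset.mp he))
  have hE1 : ∀ e ∈ G.edgeFinset, ∫ ω, α e ω ∂μ = p := fun e he =>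
    integral_of01 (hmeas e) (h01 e (SimpleGraph.mem_edgeFinset.mp he)) hp0
      (hbern e (SimpleGraph.mem_edgeFinset.mp he))
  have hI2 : ∀ e ∈ G.edgeFinset, ∀ f ∈ G.edgeFinset,
      Integrable (fun ω => α e ω * α f ω) μ := by
    intro e he f hf
    refine integrable_of01 ((hmeas e).mul (hmeas f)) (fun ω => ?_)
    rcases h01 e (SimpleGraph.mem_edgeFinset.mp he) ω with h' | h' <;>
      rcases h01 f (SimpleGraph.mem_edgeFinset.mp hf) ω with h'' | h'' <;> simp [h', h'']
  have hE2 : ∀ e ∈ G.edgeFinset, ∀ f ∈ G.edgeFinset,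
      ∫ ω, α e ω * α f ω ∂μ = if e = f then p else p * p := by
    intro e he f hf
    by_cases hef : e = f
    · subst hef
      rw [if_pos rfl]
      have h' : ∀ ω, α e ω * α e ω = α e ω := by
        intro ω
        rcases h01 e (SimpleGraph.mem_edgeFinset.mp he) ω with h' | h' <;> simp [h']
      simp only [h']
      exact hE1 e he
    · rw [if_neg hef]
      have hind : IndepFun (α e) (α f) μ := by
        have := hindep.indepFun
          (i := (⟨e, SimpleGraph.mem_edgeFinset.mp he⟩ : G.edgeSet))
          (j := (⟨f, SimpleGraph.mem_edgeFinset.mp hf⟩ : G.edgeSet))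
          (by simpa using hef)
        exact this
      have := IndepFun.integral_mul_eq_mul_integral hind (hI1 e he).aestronglyMeasurable (hI1 f hf).aestronglyMeasurable
      rw [hE1 e he, hE1 f hf] at this
      exact this
  -- the per-entry integral
  have key : ∀ (c : ℝ) (d : Sym2 V → ℝ) (q : Sym2 V → Sym2 V → ℝ),
      (∫ ω, (c + ∑ e ∈ G.edgeFinset, α e ω * d e
          + ∑ e ∈ G.edgeFinset, ∑ f ∈ G.edgeFinset, (α e ω * α f ω) * q e f) ∂μ)
        = c + ∑ e ∈ G.edgeFinset, p * d e
          + ∑ e ∈ G.edgeFinset, ∑ f ∈ G.edgeFinset, (if e = f then p else p * p) * q e f := by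
    intro c d q
    have int1 : Integrable (fun ω => ∑ e ∈ G.edgeFinset, α e ω * d e) μ :=
      integrable_finset_sum _ (fun e he => (hI1 e he).mul_const _)
    have int2 : Integrable
        (fun ω => ∑ e ∈ G.edgeFinset, ∑ f ∈ G.edgeFinset, (α e ω * α f ω) * q e f) μ :=
      integrable_finset_sum _ (fun e he =>
        integrable_finset_sum _ (fun f hf => (hI2 e he f hf).mul_const _))
    have int12 : Integrable (fun ω => c + ∑ e ∈ G.edgeFinset, α e ω * d e) μ := by
      exact (integrable_const c).add int1
    rw [integral_add int12 int2, integral_add (integrable_const c) int1, integral_const]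
    simp only [probReal_univ, ENNReal.toReal_one, one_smul]
    rw [integral_finset_sum _ (fun e he => (hI1 e he).mul_const _),
      integral_finset_sum _ (fun e he =>
        integrable_finset_sum _ (fun f hf => (hI2 e he f hf).mul_const _))]
    congr 1
    · congr 1
      refine Finset.sum_congr rfl fun e he => ?_
      rw [integral_mul_const, hE1 e he]
    · refine Finset.sum_congr rfl fun e he => ?_
      rw [integral_finset_sum _ (fun f hf => (hI2 e he f hf).mul_const _)]
      refine Finset.sum_congr rfl fun f hf => ?_
      rw [integral_mul_const, hE2 e he f hf]
  -- compute the entrywise integral as a matrix identity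
  have hof : (Matrix.of fun i j =>
      ∫ ω, (Mᵀ * C * M
          + ∑ e ∈ G.edgeFinset, α e ω • (Mᵀ * C * K e + (K e)ᵀ * C * M)
          + ∑ e ∈ G.edgeFinset, ∑ f ∈ G.edgeFinset,
              (α e ω * α f ω) • ((K e)ᵀ * C * K f)) i j ∂μ)
      = Mᵀ * C * M
        + ∑ e ∈ G.edgeFinset, p • (Mᵀ * C * K e + (K e)ᵀ * C * M)
        + ∑ e ∈ G.edgeFinset, ∑ f ∈ G.edgeFinset,
            (if e = f then p else p * p) • ((K e)ᵀ * C * K f) := by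
    ext i j
    simp only [Matrix.of_apply, Matrix.add_apply, Matrix.sum_apply, Matrix.smul_apply,
      smul_eq_mul]
    exact key ((Mᵀ * C * M) i j) (fun e => (Mᵀ * C * K e + (K e)ᵀ * C * M) i j)
      (fun e f => ((K e)ᵀ * C * K f) i j)
  rw [hof]
  -- now pure matrix algebra
  have hKL : (∑ e ∈ G.edgeFinset, K e) = G.lapMatrix ℝ ⊗ₖ Bc := by
    rw [hK, ← sum_kronecker', ← lapMatrix_eq_sum]
  have hRHS1 : (1 : Matrix V V ℝ) ⊗ₖ Bd + G.lapMatrix ℝ ⊗ₖ (p • Bc + Bp)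
      = M + p • (G.lapMatrix ℝ ⊗ₖ Bc) := by
    rw [kronecker_add, kronecker_smul, hM]
    abel
  rw [hRHS1]
  have hexp : (M + p • (G.lapMatrix ℝ ⊗ₖ Bc))ᵀ * C * (M + p • (G.lapMatrix ℝ ⊗ₖ Bc))
      = Mᵀ * C * M + p • (Mᵀ * C * (G.lapMatrix ℝ ⊗ₖ Bc))
        + p • ((G.lapMatrix ℝ ⊗ₖ Bc)ᵀ * C * M)
        + (p * p) • ((G.lapMatrix ℝ ⊗ₖ Bc)ᵀ * C * (G.lapMatrix ℝ ⊗ₖ Bc)) := by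
    simp only [transpose_add, transpose_smul, Matrix.add_mul, Matrix.mul_add,
      Matrix.smul_mul, Matrix.mul_smul, smul_smul, smul_add]
    abel
  rw [hexp]
  have hD : ∑ e ∈ G.edgeFinset, p • (Mᵀ * C * K e + (K e)ᵀ * C * M)
      = p • (Mᵀ * C * (G.lapMatrix ℝ ⊗ₖ Bc)) + p • ((G.lapMatrix ℝ ⊗ₖ Bc)ᵀ * C * M) := by
    rw [← Finset.smul_sum, Finset.sum_add_distrib, ← Matrix.mul_sum, ← Matrix.sum_mul]
    rw [show (∑ e ∈ G.edgeFinset, (K e)ᵀ * C) = (∑ e ∈ G.edgeFinset, K e)ᵀ * C by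
      rw [transpose_sum, Matrix.sum_mul]]
    rw [hKL, smul_add]
  rw [hD]
  have hEe : ∀ e ∈ G.edgeFinset,
      (K e)ᵀ * C * K e = (2 : ℝ) • (edgeLaplacian e ⊗ₖ (Bcᵀ * Q * Bc)) := by
    intro e he
    have hnd : ¬ e.IsDiag :=
      SimpleGraph.not_isDiag_of_mem_edgeSet G (SimpleGraph.mem_edgeFinset.mp he)
    rw [hK, hC, ← kroneckerMap_transpose, (edgeLaplacian_isSymm e).eq]
    rw [← Matrix.mul_kronecker_mul, ← Matrix.mul_kronecker_mul, Matrix.mul_one,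
      edgeLaplacian_mul_self hnd, smul_kronecker]
  have hsplit : ∑ e ∈ G.edgeFinset, ∑ f ∈ G.edgeFinset,
      (if e = f then p else p * p) • ((K e)ᵀ * C * K f)
      = (∑ e ∈ G.edgeFinset, ∑ f ∈ G.edgeFinset, (p * p) • ((K e)ᵀ * C * K f))
        + ∑ e ∈ G.edgeFinset, (p - p * p) • ((K e)ᵀ * C * K e) := by
    rw [← Finset.sum_add_distrib]
    refine Finset.sum_congr rfl fun e he => ?_
    have h1 : ∀ f ∈ G.edgeFinset, (if e = f then p else p * p) • ((K e)ᵀ * C * K f)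
        = (p * p) • ((K e)ᵀ * C * K f)
          + (if f = e then (p - p * p) • ((K e)ᵀ * C * K e) else 0) := by
      intro f hf
      by_cases h : f = e
      · subst h
        rw [if_pos rfl, if_pos rfl, ← add_smul]
        ring_nf
      · rw [if_neg (fun hh => h hh.symm), if_neg h, add_zero]
    rw [Finset.sum_congr rfl h1, Finset.sum_add_distrib,
      Finset.sum_ite_eq' G.edgeFinset e (fun _ => (p - p * p) • ((K e)ᵀ * C * K e)),
      if_pos he]
  rw [hsplit]
  have hsq : ∑ e ∈ G.edgeFinset, ∑ f ∈ G.edgeFinset, (p * p) • ((K e)ᵀ * C * K f)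
      = (p * p) • ((G.lapMatrix ℝ ⊗ₖ Bc)ᵀ * C * (G.lapMatrix ℝ ⊗ₖ Bc)) := by
    rw [← hKL, transpose_sum, Matrix.sum_mul, Matrix.sum_mul, Finset.smul_sum]
    refine Finset.sum_congr rfl fun e he => ?_
    rw [Matrix.mul_sum, Finset.smul_sum]
  rw [hsq]
  have hdiag : ∑ e ∈ G.edgeFinset, (p - p * p) • ((K e)ᵀ * C * K e)
      = (2 * p * (1 - p)) • (G.lapMatrix ℝ ⊗ₖ (Bcᵀ * Q * Bc)) := by
    rw [Finset.sum_congr rfl (fun e he => by rw [hEe e he])]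
    simp only [smul_smul]
    rw [← Finset.smul_sum, ← sum_kronecker', ← lapMatrix_eq_sum]
    congr 1
    ring
  rw [hdiag]
  abel
end

section
/- Consider a switched Markov jump linear system with finite mode sets K and K̃, matrices A_{i,j} ∈ ℝ^{n×n}, C_{i,j} ∈ ℝ^{q×n} for i ∈ K̃, j ∈ K, and probabilities t_i^j ≥ 0 with Σ_{i∈K̃} t_i^j = 1 for each j ∈ K. Suppose there exists a symmetric positive definite matrix Q such that for every j ∈ K, Σ_{i∈K̃} t_i^j (A_{i,j}ᵀ Q A_{i,j} + C_{i,j}ᵀ C_{i,j}) ≺ Q. Then the system is mean-square stable: for every deterministic switching sequence ν : ℕ → K, every sequence (σ_k)_{k∈ℕ} of mutually independent K̃-valued random variables with ℙ(σ_k = i) = t_i^{ν_k}, and every initial state ξ₀ ∈ ℝⁿ, the state process defined by ξ_{k+1} = A_{σ_k, ν_k} ξ_k satisfies lim_{k→∞} E[‖ξ_k‖²] = 0. -/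
open MeasureTheory ProbabilityTheory Matrix

section Aux

lemma quad_transform {n m : ℕ} (B : Matrix (Fin m) (Fin n) ℝ) (X : Matrix (Fin m) (Fin m) ℝ)
    (w : Fin n → ℝ) :
    (B.mulVec w) ⬝ᵥ X.mulVec (B.mulVec w) = w ⬝ᵥ ((Bᵀ * X * B).mulVec w) := by
  rw [Matrix.dotProduct_mulVec, Matrix.dotProduct_mulVec, Matrix.vecMul_vecMul,
    ← Matrix.vecMul_transpose, Matrix.vecMul_vecMul]
  simp [← Matrix.dotProduct_mulVec, Matrix.mul_assoc]

lemma posdef_lb {n : ℕ} (M : Matrix (Fin n) (Fin n) ℝ) (hM : M.PosDef) (hn : 0 < n) :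
    ∃ ε > 0, ∀ v : Fin n → ℝ, ε * (v ⬝ᵥ v) ≤ v ⬝ᵥ M.mulVec v := by
  classical
  set E := EuclideanSpace ℝ (Fin n)
  let f : E → ℝ := fun x => (fun i => x i) ⬝ᵥ M.mulVec (fun i => x i)
  have hf : Continuous f := by
    have : f = fun x : E => ∑ i, x i * ∑ j, M i j * x j := by
      funext x; simp [f, dotProduct, Matrix.mulVec]
    rw [this]
    refine continuous_finset_sum _ fun i _ => ?_
    exact ((continuous_apply (A := fun _ : Fin n => ℝ) i).comp
      (PiLp.continuous_ofLp (p := 2) (β := fun _ : Fin n => ℝ))).mul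
      (continuous_finset_sum _ fun j _ =>
        continuous_const.mul ((continuous_apply (A := fun _ : Fin n => ℝ) j).comp
          (PiLp.continuous_ofLp (p := 2) (β := fun _ : Fin n => ℝ))))
  have hsne : (Metric.sphere (0 : E) 1).Nonempty := by
    refine ⟨EuclideanSpace.single ⟨0, hn⟩ 1, ?_⟩
    rw [mem_sphere_iff_norm, sub_zero, EuclideanSpace.norm_single]; norm_num
  obtain ⟨x₀, hx₀, hmin⟩ := (isCompact_sphere (0 : E) 1).exists_isMinOn hsne hf.continuousOn
  have hx₀norm : ‖x₀‖ = 1 := by simpa using hx₀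
  have hx₀ne : x₀ ≠ 0 := by intro h; rw [h] at hx₀norm; simp at hx₀norm
  have hε : 0 < f x₀ := by simpa only [star_trivial] using hM.dotProduct_mulVec_pos (x := fun i => x₀ i) (by
    intro h
    apply hx₀ne
    ext i
    exact congrFun h i)
  have hnormsq : ∀ x : E, (fun i => x i) ⬝ᵥ (fun i => x i) = ‖x‖ ^ 2 := by
    intro x
    rw [EuclideanSpace.norm_eq]
    rw [Real.sq_sqrt (by positivity)]
    simp [dotProduct, pow_two]
  refine ⟨f x₀, hε, fun v => ?_⟩
  by_cases hv : v = 0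
  · simp [hv]
  · set x : E := (WithLp.equiv 2 (Fin n → ℝ)).symm v with hx
    have hxv : (fun i => x i) = v := rfl
    have hxne : x ≠ 0 := by
      intro h; apply hv; ext i; exact congrFun (congrArg (fun y : E => (fun i => y i)) h) i
    have hc : 0 < ‖x‖ := norm_pos_iff.2 hxne
    set u : E := ‖x‖⁻¹ • x with hu
    have huS : u ∈ Metric.sphere (0 : E) 1 := by
      simp [hu, mem_sphere_iff_norm, norm_smul, abs_of_pos (inv_pos.2 hc),
        inv_mul_cancel₀ hc.ne']
    have hscale : f u = ‖x‖⁻¹ * ‖x‖⁻¹ * f x := by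
      have hui : (fun i => u i) = ‖x‖⁻¹ • (fun i => x i) := rfl
      simp only [f, hui, Matrix.mulVec_smul, dotProduct_smul, smul_dotProduct,
        smul_eq_mul]
      ring
    have hle : f x₀ ≤ f u := hmin huS
    rw [hscale] at hle
    have hfx : f x = v ⬝ᵥ M.mulVec v := by rw [← hxv]
    have hvv : v ⬝ᵥ v = ‖x‖ ^ 2 := by rw [← hxv]; exact hnormsq x
    have h2 : f x₀ * ‖x‖ ^ 2 ≤ f x := by
      have h3 := mul_le_mul_of_nonneg_left hle (by positivity : (0:ℝ) ≤ ‖x‖ ^ 2)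
      calc f x₀ * ‖x‖ ^ 2 = ‖x‖ ^ 2 * f x₀ := by ring
        _ ≤ ‖x‖ ^ 2 * (‖x‖⁻¹ * ‖x‖⁻¹ * f x) := h3
        _ = f x := by field_simp
    rw [hvv, ← hfx]
    exact h2

lemma quad_ub {n : ℕ} (M : Matrix (Fin n) (Fin n) ℝ) (v : Fin n → ℝ) :
    v ⬝ᵥ M.mulVec v ≤ (∑ i, ∑ j, |M i j|) * (v ⬝ᵥ v) := by
  have hS : ∀ i, v i ^ 2 ≤ v ⬝ᵥ v := fun i => by
    refine Finset.single_le_sum (f := fun k => v k * v k) (fun k _ => mul_self_nonneg _)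
      (Finset.mem_univ i) |>.trans_eq' ?_
    ring
  have hvv : ∀ i j, |v i * v j| ≤ v ⬝ᵥ v := by
    intro i j
    rw [abs_mul]
    nlinarith [sq_abs (v i), sq_abs (v j), abs_nonneg (v i), abs_nonneg (v j), hS i, hS j,
      sq_nonneg (|v i| - |v j|)]
  rw [show v ⬝ᵥ M.mulVec v = ∑ i, ∑ j, v i * (M i j * v j) by
    simp [dotProduct, Matrix.mulVec, Finset.mul_sum]]
  rw [Finset.sum_mul]
  refine Finset.sum_le_sum fun i _ => ?_
  rw [Finset.sum_mul]
  refine Finset.sum_le_sum fun j _ => ?_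
  calc v i * (M i j * v j) ≤ |v i * (M i j * v j)| := le_abs_self _
    _ = |M i j| * |v i * v j| := by rw [abs_mul, abs_mul, abs_mul]; ring
    _ ≤ |M i j| * (v ⬝ᵥ v) := mul_le_mul_of_nonneg_left (hvv i j) (abs_nonneg _)

lemma dot_sum_smul_mulVec {n : ℕ} {ι : Type*} [Fintype ι] (c : ι → ℝ)
    (M : ι → Matrix (Fin n) (Fin n) ℝ) (v w : Fin n → ℝ) :
    v ⬝ᵥ (∑ i, c i • M i).mulVec w = ∑ i, c i * (v ⬝ᵥ (M i).mulVec w) := by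
  simp only [Matrix.mulVec, dotProduct, Matrix.sum_apply, Matrix.smul_apply,
    smul_eq_mul, Finset.sum_mul, Finset.mul_sum]
  have h1 : ∀ a : Fin n, (∑ b : Fin n, ∑ i : ι, v a * (c i * M i a b * w b))
      = ∑ i : ι, ∑ b : Fin n, v a * (c i * M i a b * w b) := fun a => Finset.sum_comm
  simp only [h1]
  rw [Finset.sum_comm]
  exact Finset.sum_congr rfl fun i _ => Finset.sum_congr rfl fun a _ =>
    Finset.sum_congr rfl fun b _ => by ring

/-- The product of system matrices along a deterministic/stochastic mode history. -/
noncomputable def mjlsP {K Ktil : Type*} {n : ℕ} (A : Ktil → K → Matrix (Fin n) (Fin n) ℝ)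
    (ν : ℕ → K) : (k : ℕ) → (Fin k → Ktil) → Matrix (Fin n) (Fin n) ℝ
  | 0, _ => 1
  | (k + 1), g => A (g (Fin.last k)) (ν k) * mjlsP A ν k (fun m => g m.castSucc)

/-- The expected value of the quadratic form `X` along the process at time `k`. -/
noncomputable def mjlsW {K Ktil : Type*} [Fintype Ktil] {n : ℕ}
    (A : Ktil → K → Matrix (Fin n) (Fin n) ℝ) (ν : ℕ → K) (t : Ktil → K → ℝ)
    (ξ₀ : Fin n → ℝ) (k : ℕ) (X : Matrix (Fin n) (Fin n) ℝ) : ℝ :=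
  ∑ g : Fin k → Ktil, (∏ m, t (g m) (ν m)) *
    ((mjlsP A ν k g).mulVec ξ₀ ⬝ᵥ X.mulVec ((mjlsP A ν k g).mulVec ξ₀))

variable {K Ktil : Type*} [Fintype Ktil] {n : ℕ}
  (A : Ktil → K → Matrix (Fin n) (Fin n) ℝ) (ν : ℕ → K) (t : Ktil → K → ℝ) (ξ₀ : Fin n → ℝ)

lemma mjlsW_succ (k : ℕ) (X : Matrix (Fin n) (Fin n) ℝ) :
    mjlsW A ν t ξ₀ (k + 1) X
      = ∑ i, t i (ν k) * mjlsW A ν t ξ₀ k ((A i (ν k))ᵀ * X * A i (ν k)) := by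
  classical
  unfold mjlsW
  rw [← (Fin.snocEquiv (fun _ : Fin (k+1) => Ktil)).sum_comp]
  rw [Fintype.sum_prod_type]
  refine Finset.sum_congr rfl fun i _ => ?_
  rw [Finset.mul_sum]
  refine Finset.sum_congr rfl fun g _ => ?_
  have hsnoc : mjlsP A ν (k + 1) (Fin.snocEquiv (fun _ : Fin (k+1) => Ktil) (i, g))
      = A i (ν k) * mjlsP A ν k g := by
    simp [mjlsP, Fin.snocEquiv_apply, Fin.snoc_castSucc, Fin.snoc_last]
  have hprod : (∏ m : Fin (k + 1),
        t (Fin.snocEquiv (fun _ : Fin (k+1) => Ktil) (i, g) m) (ν m))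
      = (∏ m : Fin k, t (g m) (ν m)) * t i (ν k) := by
    rw [Fin.prod_univ_castSucc]
    simp [Fin.snocEquiv_apply, Fin.snoc_castSucc, Fin.snoc_last]
  rw [hsnoc, hprod, ← Matrix.mulVec_mulVec, quad_transform]
  ring

lemma mjlsW_zero (X : Matrix (Fin n) (Fin n) ℝ) :
    mjlsW A ν t ξ₀ 0 X = ξ₀ ⬝ᵥ X.mulVec ξ₀ := by
  simp [mjlsW, mjlsP, Matrix.one_mulVec]

lemma mjlsW_smul (k : ℕ) (c : ℝ) (X : Matrix (Fin n) (Fin n) ℝ) :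
    mjlsW A ν t ξ₀ k (c • X) = c * mjlsW A ν t ξ₀ k X := by
  unfold mjlsW
  rw [Finset.mul_sum]
  refine Finset.sum_congr rfl fun g _ => ?_
  rw [Matrix.smul_mulVec, dotProduct_smul, smul_eq_mul]
  ring

lemma mjlsW_weighted {ι : Type*} [Fintype ι] (k : ℕ) (c : ι → ℝ)
    (M : ι → Matrix (Fin n) (Fin n) ℝ) :
    mjlsW A ν t ξ₀ k (∑ i, c i • M i) = ∑ i, c i * mjlsW A ν t ξ₀ k (M i) := by
  unfold mjlsW
  simp only [dot_sum_smul_mulVec, Finset.mul_sum]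
  rw [Finset.sum_comm]
  exact Finset.sum_congr rfl fun i _ => Finset.sum_congr rfl fun g _ => by ring

lemma mjlsW_mono (htnn : ∀ i j, 0 ≤ t i j) (k : ℕ) {X Y : Matrix (Fin n) (Fin n) ℝ}
    (h : ∀ v : Fin n → ℝ, v ⬝ᵥ X.mulVec v ≤ v ⬝ᵥ Y.mulVec v) :
    mjlsW A ν t ξ₀ k X ≤ mjlsW A ν t ξ₀ k Y := by
  refine Finset.sum_le_sum fun g _ => ?_
  exact mul_le_mul_of_nonneg_left (h _) (Finset.prod_nonneg fun m _ => htnn _ _)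

lemma mjlsW_nonneg (htnn : ∀ i j, 0 ≤ t i j) (k : ℕ) {X : Matrix (Fin n) (Fin n) ℝ}
    (h : ∀ v : Fin n → ℝ, 0 ≤ v ⬝ᵥ X.mulVec v) :
    0 ≤ mjlsW A ν t ξ₀ k X := by
  refine Finset.sum_nonneg fun g _ => ?_
  exact mul_nonneg (Finset.prod_nonneg fun m _ => htnn _ _) (h _)

end Aux

/-- Consider a switched Markov jump linear system with finite mode sets `K`
(deterministic) and `K̃` (stochastic), matrices `A i j`, `C i j` and probabilities `t i j ≥ 0`
with `Σ_i t i j = 1`.  If there is a symmetric positive definite `Q` with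
`Σ_i t i j • (A i jᵀ Q A i j + C i jᵀ C i j) ≺ Q` for every `j`, then the system is mean-square
stable: for every deterministic switching sequence `ν`, every sequence `σ` of mutually
independent `K̃`-valued random variables with `ℙ(σ k = i) = t i (ν k)`, and every initial state,
the state process `ξ_{k+1} = A (σ k) (ν k) ξ_k` satisfies `E[‖ξ_k‖²] → 0`. -/
theorem switched_mjls_mean_square_stable
    {K Ktil : Type*} [Fintype K] [Fintype Ktil] [Nonempty K] [Nonempty Ktil]
    [MeasurableSpace Ktil] [MeasurableSingletonClass Ktil]
    {n q : ℕ}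
    (A : Ktil → K → Matrix (Fin n) (Fin n) ℝ)
    (C : Ktil → K → Matrix (Fin q) (Fin n) ℝ)
    (t : Ktil → K → ℝ)
    (ht : ∀ i j, 0 ≤ t i j) (htsum : ∀ j, ∑ i, t i j = 1)
    (Q : Matrix (Fin n) (Fin n) ℝ) (hQsymm : Q.IsSymm) (hQ : Q.PosDef)
    (hLMI : ∀ j,
      (Q - ∑ i, t i j • ((A i j)ᵀ * Q * A i j + (C i j)ᵀ * C i j)).PosDef)
    {Ω : Type*} [MeasurableSpace Ω] (μ : Measure Ω) [IsProbabilityMeasure μ]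
    (ν : ℕ → K) (σ : ℕ → Ω → Ktil)
    (hσmeas : ∀ k, Measurable (σ k))
    (hσindep : iIndepFun σ μ)
    (hσdist : ∀ k i, μ {ω | σ k ω = i} = ENNReal.ofReal (t i (ν k)))
    (ξ₀ : Fin n → ℝ) (ξ : ℕ → Ω → Fin n → ℝ)
    (hinit : ∀ ω, ξ 0 ω = ξ₀)
    (hrec : ∀ k ω, ξ (k + 1) ω = (A (σ k ω) (ν k)).mulVec (ξ k ω)) :
    Filter.Tendsto (fun k => ∫ ω, ξ k ω ⬝ᵥ ξ k ω ∂μ) Filter.atTop (nhds 0) := by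
  classical
  rcases Nat.eq_zero_or_pos n with hn | hn
  · -- trivial case `n = 0`
    subst hn
    have hz : ∀ k, ∫ ω, ξ k ω ⬝ᵥ ξ k ω ∂μ = 0 := by
      intro k
      have : ∀ ω, ξ k ω ⬝ᵥ ξ k ω = 0 := fun ω => by simp [dotProduct]
      simp [this]
    have hfun : (fun k => ∫ ω, ξ k ω ⬝ᵥ ξ k ω ∂μ) = fun _ => (0 : ℝ) := funext hz
    rw [hfun]
    exact tendsto_const_nhds
  -- the state is a matrix product applied to the initial state
  have hxi : ∀ k ω, ξ k ω = (mjlsP A ν k (fun m => σ m ω)).mulVec ξ₀ := by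
    intro k
    induction k with
    | zero => intro ω; simp [mjlsP, hinit ω, Matrix.one_mulVec]
    | succ k ih =>
      intro ω
      rw [hrec k ω, ih ω, Matrix.mulVec_mulVec]
      congr 1
  -- the expectation of any quadratic form is given by `mjlsW`
  have hint : ∀ k (X : Matrix (Fin n) (Fin n) ℝ),
      ∫ ω, ξ k ω ⬝ᵥ X.mulVec (ξ k ω) ∂μ = mjlsW A ν t ξ₀ k X := by
    intro k X
    set c : (Fin k → Ktil) → ℝ := fun g =>
      (mjlsP A ν k g).mulVec ξ₀ ⬝ᵥ X.mulVec ((mjlsP A ν k g).mulVec ξ₀) with hc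
    set E : (Fin k → Ktil) → Set Ω := fun g => ⋂ m : Fin k, σ m ⁻¹' {g m} with hE
    have hEmeas : ∀ g, MeasurableSet (E g) := fun g =>
      MeasurableSet.iInter fun m => (hσmeas m) (measurableSet_singleton _)
    have hpt : ∀ ω, ξ k ω ⬝ᵥ X.mulVec (ξ k ω)
        = ∑ g, (E g).indicator (fun _ => c g) ω := by
      intro ω
      rw [Finset.sum_eq_single (fun m : Fin k => σ (m : ℕ) ω)]
      · have hmem : ω ∈ E (fun m : Fin k => σ (m : ℕ) ω) :=
          Set.mem_iInter.2 fun m => Set.mem_preimage.2 rfl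
        rw [Set.indicator_of_mem hmem, hxi k ω]
      · intro g _ hg
        rw [Set.indicator_of_notMem]
        intro hmem
        apply hg
        funext m
        exact (Set.mem_iInter.1 hmem m).symm
      · intro h; exact absurd (Finset.mem_univ _) h
    have hmeasE : ∀ g : Fin k → Ktil,
        μ (E g) = ∏ m : Fin k, ENNReal.ofReal (t (g m) (ν m)) := by
      intro g
      set s : ℕ → Set Ktil := fun i => if h : i < k then {g ⟨i, h⟩} else Set.univ with hs
      have hsm : ∀ i, i ∈ Finset.range k → MeasurableSet (s i) := by
        intro i _
        by_cases h : i < k <;> simp [s, h]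
      have h1 := hσindep.measure_inter_preimage_eq_mul (Finset.range k) hsm
      have hEeq : E g = ⋂ i ∈ Finset.range k, σ i ⁻¹' s i := by
        ext ω
        simp only [hE, Set.mem_iInter, Set.mem_preimage, Finset.mem_range,
          Set.mem_singleton_iff, s]
        constructor
        · intro h i hi
          rw [dif_pos hi]
          exact h ⟨i, hi⟩
        · intro h m
          have h2 := h (m : ℕ) m.isLt
          rw [dif_pos m.isLt] at h2
          simpa using h2
      rw [hEeq, h1]
      rw [← Fin.prod_univ_eq_prod_range (fun i => μ (σ i ⁻¹' s i)) k]
      refine Finset.prod_congr rfl fun m _ => ?_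
      have hsg : s (m : ℕ) = {g m} := by
        rw [hs]
        simp [m.isLt]
      rw [hsg]
      have : σ (m : ℕ) ⁻¹' {g m} = {ω | σ (m : ℕ) ω = g m} := by ext ω; simp
      rw [this, hσdist]
    have hint2 : ∫ ω, ξ k ω ⬝ᵥ X.mulVec (ξ k ω) ∂μ = ∑ g, (μ (E g)).toReal * c g := by
      calc ∫ ω, ξ k ω ⬝ᵥ X.mulVec (ξ k ω) ∂μ
          = ∫ ω, ∑ g, (E g).indicator (fun _ => c g) ω ∂μ :=
            integral_congr_ae (Filter.Eventually.of_forall fun ω => hpt ω)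
        _ = ∑ g, ∫ ω, (E g).indicator (fun _ => c g) ω ∂μ :=
            integral_finset_sum _ (fun g _ => (integrable_const (c g)).indicator (hEmeas g))
        _ = ∑ g, (μ (E g)).toReal * c g := by
            refine Finset.sum_congr rfl fun g _ => ?_
            rw [integral_indicator_const _ (hEmeas g), smul_eq_mul, measureReal_def]
    rw [hint2]
    refine Finset.sum_congr rfl fun g _ => ?_
    rw [hmeasE g, ENNReal.toReal_prod]
    congr 1
    exact Finset.prod_congr rfl fun m _ => ENNReal.toReal_ofReal (ht _ _)
  -- constants
  obtain ⟨εQ, hεQpos, hεQ⟩ := posdef_lb Q hQ hn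
  have hDlb : ∀ j : K, ∃ ε > 0, ∀ v : Fin n → ℝ,
      ε * (v ⬝ᵥ v) ≤ v ⬝ᵥ (Q - ∑ i, t i j • ((A i j)ᵀ * Q * A i j + (C i j)ᵀ * C i j)).mulVec v :=
    fun j => posdef_lb _ (hLMI j) hn
  choose εD hεDpos hεD using hDlb
  set ε : ℝ := Finset.univ.inf' Finset.univ_nonempty εD with hεdef
  have hεpos : 0 < ε := by
    rw [hεdef, Finset.lt_inf'_iff]
    exact fun j _ => hεDpos j
  have hεle : ∀ j, ε ≤ εD j := fun j => Finset.inf'_le _ (Finset.mem_univ j)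
  set Λ : ℝ := (∑ i, ∑ j, |Q i j|) + 1 with hΛdef
  have hΛpos : 0 < Λ := by
    have h0 : 0 ≤ ∑ i, ∑ j, |Q i j| :=
      Finset.sum_nonneg fun i _ => Finset.sum_nonneg fun j _ => abs_nonneg _
    rw [hΛdef]; linarith
  have hQub : ∀ v : Fin n → ℝ, v ⬝ᵥ Q.mulVec v ≤ Λ * (v ⬝ᵥ v) := by
    intro v
    have h1 := quad_ub Q v
    have hvv : 0 ≤ v ⬝ᵥ v := Finset.sum_nonneg fun i _ => mul_self_nonneg _
    rw [hΛdef]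
    nlinarith
  set ρ : ℝ := max (1 - ε / Λ) 0 with hρdef
  have hρ0 : 0 ≤ ρ := le_max_right _ _
  have hρ1 : ρ < 1 := by
    rw [hρdef]
    refine max_lt ?_ one_pos
    have : 0 < ε / Λ := div_pos hεpos hΛpos
    linarith
  -- key quadratic form inequality
  have hkey : ∀ (j : K) (v : Fin n → ℝ),
      v ⬝ᵥ (∑ i, t i j • ((A i j)ᵀ * Q * A i j)).mulVec v ≤ ρ * (v ⬝ᵥ Q.mulVec v) := by
    intro j v
    have hvv : 0 ≤ v ⬝ᵥ v := Finset.sum_nonneg fun i _ => mul_self_nonneg _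
    have hQv : 0 ≤ v ⬝ᵥ Q.mulVec v := le_trans (mul_nonneg hεQpos.le hvv) (hεQ v)
    have hSe : v ⬝ᵥ (∑ i, t i j • ((A i j)ᵀ * Q * A i j)).mulVec v
        = ∑ i, t i j * (v ⬝ᵥ ((A i j)ᵀ * Q * A i j).mulVec v) :=
      dot_sum_smul_mulVec _ _ _ _
    have hTe : v ⬝ᵥ (∑ i, t i j • ((A i j)ᵀ * Q * A i j + (C i j)ᵀ * C i j)).mulVec v
        = ∑ i, t i j * (v ⬝ᵥ ((A i j)ᵀ * Q * A i j).mulVec v)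
          + ∑ i, t i j * ((C i j).mulVec v ⬝ᵥ (C i j).mulVec v) := by
      rw [dot_sum_smul_mulVec, ← Finset.sum_add_distrib]
      refine Finset.sum_congr rfl fun i _ => ?_
      rw [Matrix.add_mulVec, dotProduct_add]
      have hCv : (C i j).mulVec v ⬝ᵥ (C i j).mulVec v = v ⬝ᵥ ((C i j)ᵀ * C i j).mulVec v := by
        have h := quad_transform (C i j) 1 v
        simpa [Matrix.one_mulVec, Matrix.mul_one] using h
      rw [hCv]
      ring
    have hCnn : 0 ≤ ∑ i, t i j * ((C i j).mulVec v ⬝ᵥ (C i j).mulVec v) :=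
      Finset.sum_nonneg fun i _ => mul_nonneg (ht i j)
        (Finset.sum_nonneg fun l _ => mul_self_nonneg _)
    have hD := hεD j v
    have hDexp : v ⬝ᵥ (Q - ∑ i, t i j • ((A i j)ᵀ * Q * A i j + (C i j)ᵀ * C i j)).mulVec v
        = v ⬝ᵥ Q.mulVec v
          - v ⬝ᵥ (∑ i, t i j • ((A i j)ᵀ * Q * A i j + (C i j)ᵀ * C i j)).mulVec v := by
      rw [Matrix.sub_mulVec, dotProduct_sub]
    rw [hDexp] at hD
    have hstep : v ⬝ᵥ (∑ i, t i j • ((A i j)ᵀ * Q * A i j)).mulVec v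
        ≤ (1 - ε / Λ) * (v ⬝ᵥ Q.mulVec v) := by
      have h1 : v ⬝ᵥ (∑ i, t i j • ((A i j)ᵀ * Q * A i j)).mulVec v
          ≤ v ⬝ᵥ Q.mulVec v - εD j * (v ⬝ᵥ v) := by
        rw [hSe]
        rw [hTe] at hD
        linarith
      have h2 : ε / Λ * (v ⬝ᵥ Q.mulVec v) ≤ ε * (v ⬝ᵥ v) := by
        rw [div_mul_eq_mul_div, div_le_iff₀ hΛpos]
        calc ε * (v ⬝ᵥ Q.mulVec v) ≤ ε * (Λ * (v ⬝ᵥ v)) :=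
              mul_le_mul_of_nonneg_left (hQub v) hεpos.le
          _ = ε * (v ⬝ᵥ v) * Λ := by ring
      have h3 : ε * (v ⬝ᵥ v) ≤ εD j * (v ⬝ᵥ v) :=
        mul_le_mul_of_nonneg_right (hεle j) hvv
      linarith
    calc v ⬝ᵥ (∑ i, t i j • ((A i j)ᵀ * Q * A i j)).mulVec v
        ≤ (1 - ε / Λ) * (v ⬝ᵥ Q.mulVec v) := hstep
      _ ≤ ρ * (v ⬝ᵥ Q.mulVec v) := mul_le_mul_of_nonneg_right (le_max_left _ _) hQv
  -- contraction of the Lyapunov expectation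
  have hWQstep : ∀ k, mjlsW A ν t ξ₀ (k + 1) Q ≤ ρ * mjlsW A ν t ξ₀ k Q := by
    intro k
    rw [mjlsW_succ]
    rw [← mjlsW_weighted A ν t ξ₀ k (fun i => t i (ν k)) (fun i => (A i (ν k))ᵀ * Q * A i (ν k))]
    have h2 : mjlsW A ν t ξ₀ k (∑ i, t i (ν k) • ((A i (ν k))ᵀ * Q * A i (ν k)))
        ≤ mjlsW A ν t ξ₀ k (ρ • Q) := by
      refine mjlsW_mono A ν t ξ₀ ht k fun v => ?_
      rw [Matrix.smul_mulVec, dotProduct_smul, smul_eq_mul]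
      exact hkey (ν k) v
    calc mjlsW A ν t ξ₀ k (∑ i, t i (ν k) • ((A i (ν k))ᵀ * Q * A i (ν k)))
        ≤ mjlsW A ν t ξ₀ k (ρ • Q) := h2
      _ = ρ * mjlsW A ν t ξ₀ k Q := mjlsW_smul A ν t ξ₀ k ρ Q
  have hWQ : ∀ k, mjlsW A ν t ξ₀ k Q ≤ ρ ^ k * mjlsW A ν t ξ₀ 0 Q := by
    intro k
    induction k with
    | zero => simp
    | succ k ih =>
      calc mjlsW A ν t ξ₀ (k + 1) Q ≤ ρ * mjlsW A ν t ξ₀ k Q := hWQstep k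
        _ ≤ ρ * (ρ ^ k * mjlsW A ν t ξ₀ 0 Q) := mul_le_mul_of_nonneg_left ih hρ0
        _ = ρ ^ (k + 1) * mjlsW A ν t ξ₀ 0 Q := by ring
  -- squeeze
  have hW1nn : ∀ k, 0 ≤ mjlsW A ν t ξ₀ k 1 := fun k =>
    mjlsW_nonneg A ν t ξ₀ ht k fun v => by
      rw [Matrix.one_mulVec]
      exact Finset.sum_nonneg fun i _ => mul_self_nonneg _
  have hW1le : ∀ k, mjlsW A ν t ξ₀ k 1 ≤ (mjlsW A ν t ξ₀ 0 Q / εQ) * ρ ^ k := by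
    intro k
    have hεW : εQ * mjlsW A ν t ξ₀ k 1 ≤ mjlsW A ν t ξ₀ k Q := by
      have h := mjlsW_mono A ν t ξ₀ ht k (X := εQ • 1) (Y := Q) fun v => by
        rw [Matrix.smul_mulVec, dotProduct_smul, smul_eq_mul, Matrix.one_mulVec]
        exact hεQ v
      rwa [mjlsW_smul] at h
    rw [div_mul_eq_mul_div, le_div_iff₀ hεQpos]
    calc mjlsW A ν t ξ₀ k 1 * εQ = εQ * mjlsW A ν t ξ₀ k 1 := mul_comm _ _
      _ ≤ mjlsW A ν t ξ₀ k Q := hεW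
      _ ≤ ρ ^ k * mjlsW A ν t ξ₀ 0 Q := hWQ k
      _ = mjlsW A ν t ξ₀ 0 Q * ρ ^ k := mul_comm _ _
  have hfun : (fun k => ∫ ω, ξ k ω ⬝ᵥ ξ k ω ∂μ) = fun k => mjlsW A ν t ξ₀ k 1 :=
    funext fun k => by simpa [Matrix.one_mulVec] using hint k 1
  rw [hfun]
  have hgeo : Filter.Tendsto (fun k => (mjlsW A ν t ξ₀ 0 Q / εQ) * ρ ^ k)
      Filter.atTop (nhds 0) := by
    have h := tendsto_pow_atTop_nhds_zero_of_lt_one hρ0 hρ1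
    simpa using h.const_mul (mjlsW A ν t ξ₀ 0 Q / εQ)
  exact squeeze_zero hW1nn hW1le hgeo
end

section
/- Consider a switched Markov jump linear system with finite mode sets K and K̃, matrices A_{i,j} ∈ ℝ^{n×n}, B_{i,j} ∈ ℝ^{n×m}, C_{i,j} ∈ ℝ^{q×n}, D_{i,j} ∈ ℝ^{q×m} for i ∈ K̃, j ∈ K, and probabilities t_i^j ≥ 0 with Σ_{i∈K̃} t_i^j = 1 for each j ∈ K, and let γ > 0. Suppose there exist a symmetric positive definite matrix Q and a symmetric matrix Z with trace(Z) < γ² such that for every j ∈ K: Σ_{i∈K̃} t_i^j (A_{i,j}ᵀ Q A_{i,j} + C_{i,j}ᵀ C_{i,j}) ≺ Q and Σ_{i∈K̃} t_i^j (B_{i,j}ᵀ Q B_{i,j} + D_{i,j}ᵀ D_{i,j}) ≺ Z. Then for every deterministic switching sequence ν : ℕ → K and every sequence (σ_k)_{k∈ℕ} of mutually independent K̃-valued random variables with ℙ(σ_k = i) = t_i^{ν_k}, the total impulse-response energy satisfies Σ_{s=1}^{m} Σ_{k=0}^{∞} E[‖z_k^{ν,s}‖²] < γ², where for each input channel s the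 impulse response is z_0^{ν,s} = D_{σ_0,ν_0} e_s, ξ_1^s = B_{σ_0,ν_0} e_s, and for k ≥ 1: ξ_{k+1}^s = A_{σ_k,ν_k} ξ_k^s and z_k^{ν,s} = C_{σ_k,ν_k} ξ_k^s, with e_s the s-th standard basis vector of ℝ^m. -/
open MeasureTheory ProbabilityTheory Matrix


private def mjXi {K Ktil : Type*} {n m : ℕ}
    (A : Ktil → K → Matrix (Fin n) (Fin n) ℝ)
    (B : Ktil → K → Matrix (Fin n) (Fin m) ℝ)
    (ν : ℕ → K) (s : Fin m) : ℕ → (ℕ → Ktil) → (Fin n → ℝ)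
  | 0, _ => 0
  | 1, c => (B (c 0) (ν 0)).mulVec (Pi.single s 1)
  | (k+2), c => (A (c (k+1)) (ν (k+1))).mulVec (mjXi A B ν s (k+1) c)

private lemma mjXi_congr {K Ktil : Type*} {n m : ℕ}
    (A : Ktil → K → Matrix (Fin n) (Fin n) ℝ)
    (B : Ktil → K → Matrix (Fin n) (Fin m) ℝ)
    (ν : ℕ → K) (s : Fin m) (k : ℕ) (c c' : ℕ → Ktil)
    (h : ∀ j, j < k → c j = c' j) :
    mjXi A B ν s k c = mjXi A B ν s k c' := by
  induction k with
  | zero => rfl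
  | succ k ih =>
    match k, ih with
    | 0, _ => simp only [mjXi, h 0 Nat.one_pos]
    | (k'+1), ih =>
      simp only [mjXi, h (k'+1) (Nat.lt_succ_self _),
        ih (fun j hj => h j (Nat.lt_succ_of_lt hj))]

private noncomputable def mjExt {Ktil : Type*} [Nonempty Ktil] {l : ℕ} (v : Fin l → Ktil) : ℕ → Ktil :=
  fun j => if h : j < l then v ⟨j, h⟩ else Classical.arbitrary Ktil

private lemma mj_sum_mulVec {n r : ℕ} {Ktil : Type*} [Fintype Ktil]
    (M : Ktil → Matrix (Fin r) (Fin n) ℝ) (x : Fin n → ℝ) :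
    (∑ i, M i) *ᵥ x = ∑ i, M i *ᵥ x := by
  ext j
  simp only [mulVec, dotProduct, Finset.sum_apply, Finset.sum_mul, Matrix.sum_apply]
  rw [Finset.sum_comm]

private lemma mj_dot_sum {n : ℕ} {Ktil : Type*} [Fintype Ktil]
    (x : Fin n → ℝ) (w : Ktil → Fin n → ℝ) :
    x ⬝ᵥ (∑ i, w i) = ∑ i, x ⬝ᵥ w i := by
  simp only [dotProduct, Finset.sum_apply, Finset.mul_sum]
  rw [Finset.sum_comm]

private lemma mj_quad_le {n p r : ℕ} {Ktil : Type*} [Fintype Ktil]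
    (t : Ktil → ℝ) (P : Matrix (Fin p) (Fin p) ℝ) (R : Matrix (Fin n) (Fin n) ℝ)
    (F : Ktil → Matrix (Fin p) (Fin n) ℝ) (G : Ktil → Matrix (Fin r) (Fin n) ℝ)
    (h : (R - ∑ i, t i • ((F i)ᵀ * P * F i + (G i)ᵀ * G i)).PosDef)
    (x : Fin n → ℝ) :
    ∑ i, t i * ((F i *ᵥ x) ⬝ᵥ P *ᵥ (F i *ᵥ x) + (G i *ᵥ x) ⬝ᵥ (G i *ᵥ x))
      ≤ x ⬝ᵥ R *ᵥ x := by
  have h0 := h.posSemidef.dotProduct_mulVec_nonneg x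
  rw [star_trivial, sub_mulVec, dotProduct_sub] at h0
  have key : x ⬝ᵥ (∑ i, t i • ((F i)ᵀ * P * F i + (G i)ᵀ * G i)) *ᵥ x
      = ∑ i, t i * ((F i *ᵥ x) ⬝ᵥ P *ᵥ (F i *ᵥ x) + (G i *ᵥ x) ⬝ᵥ (G i *ᵥ x)) := by
    rw [mj_sum_mulVec, mj_dot_sum]
    refine Finset.sum_congr rfl fun i _ => ?_
    rw [smul_mulVec, dotProduct_smul, smul_eq_mul]
    congr 1
    rw [add_mulVec, dotProduct_add]
    congr 1
    · rw [← mulVec_mulVec, ← mulVec_mulVec, dotProduct_mulVec, vecMul_transpose]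
    · rw [← mulVec_mulVec, dotProduct_mulVec, vecMul_transpose]
  linarith [key ▸ h0]

private noncomputable def mjZ {K Ktil : Type*} {n m q : ℕ}
    (A : Ktil → K → Matrix (Fin n) (Fin n) ℝ)
    (B : Ktil → K → Matrix (Fin n) (Fin m) ℝ)
    (C : Ktil → K → Matrix (Fin q) (Fin n) ℝ)
    (D : Ktil → K → Matrix (Fin q) (Fin m) ℝ)
    (ν : ℕ → K) (s : Fin m) (k : ℕ) (c : ℕ → Ktil) : Fin q → ℝ :=
  if k = 0 then (D (c 0) (ν 0)).mulVec (Pi.single s 1)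
  else (C (c k) (ν k)).mulVec (mjXi A B ν s k c)

private lemma mj_integral_eq {Ktil : Type*} [Fintype Ktil] [Nonempty Ktil]
    [MeasurableSpace Ktil] [MeasurableSingletonClass Ktil]
    {Ω : Type*} [MeasurableSpace Ω] (μ : Measure Ω) [IsProbabilityMeasure μ]
    (σ : ℕ → Ω → Ktil) (hσmeas : ∀ k, Measurable (σ k))
    (hσindep : iIndepFun σ μ)
    (p : ℕ → Ktil → ℝ) (hp : ∀ k i, 0 ≤ p k i)
    (hσdist : ∀ k i, μ {ω | σ k ω = i} = ENNReal.ofReal (p k i))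
    (k : ℕ) (f : (ℕ → Ktil) → ℝ)
    (hf : ∀ c c' : ℕ → Ktil, (∀ j, j ≤ k → c j = c' j) → f c = f c') :
    ∫ ω, f (fun j => σ j ω) ∂μ
      = ∑ v : Fin (k+1) → Ktil, (∏ j : Fin (k+1), p (j : ℕ) (v j)) * f (mjExt v) := by
  classical
  set E : (Fin (k+1) → Ktil) → Set Ω :=
    fun v => ⋂ j ∈ Finset.range (k+1), σ j ⁻¹' {mjExt v j} with hE
  have hEmeas : ∀ v, MeasurableSet (E v) := fun v =>
    Finset.measurableSet_biInter _ fun j _ => (hσmeas j) (measurableSet_singleton _)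
  have hEμ : ∀ v, μ (E v) = ∏ j : Fin (k+1), ENNReal.ofReal (p (j : ℕ) (v j)) := by
    intro v
    have h1 := hσindep.measure_inter_preimage_eq_mul (Finset.range (k+1))
      (sets := fun j => {mjExt v j}) (fun j _ => measurableSet_singleton _)
    rw [hE]
    rw [h1, ← Fin.prod_univ_eq_prod_range (fun j => μ (σ j ⁻¹' {mjExt v j})) (k+1)]
    refine Finset.prod_congr rfl fun j _ => ?_
    have h2 : σ (j : ℕ) ⁻¹' {mjExt v (j : ℕ)} = {ω | σ (j : ℕ) ω = mjExt v (j : ℕ)} := rfl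
    rw [h2, hσdist]
    congr 1
    simp [mjExt, j.isLt]
  have hpt : ∀ ω, f (fun j => σ j ω)
      = ∑ v : Fin (k+1) → Ktil, Set.indicator (E v) (fun _ => f (mjExt v)) ω := by
    intro ω
    have hmem : ω ∈ E (fun j => σ (j : ℕ) ω) := by
      simp only [hE, Set.mem_iInter, Set.mem_preimage, Set.mem_singleton_iff,
        Finset.mem_range]
      intro j hj
      simp [mjExt, hj]
    rw [Finset.sum_eq_single (fun j : Fin (k+1) => σ (j : ℕ) ω)]
    · rw [Set.indicator_of_mem hmem]
      exact (hf _ _ fun j hj => by simp [mjExt, Nat.lt_succ_of_le hj]).symm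
    · intro v _ hv
      refine Set.indicator_of_notMem ?_ _
      simp only [hE, Set.mem_iInter, Set.mem_preimage, Set.mem_singleton_iff,
        Finset.mem_range]
      intro hmem'
      apply hv
      funext j
      have h2 := hmem' (j : ℕ) j.isLt
      simpa [mjExt, j.isLt] using h2.symm
    · intro h; exact absurd (Finset.mem_univ _) h
  calc ∫ ω, f (fun j => σ j ω) ∂μ
      = ∫ ω, ∑ v : Fin (k+1) → Ktil, Set.indicator (E v) (fun _ => f (mjExt v)) ω ∂μ :=
        integral_congr_ae (Filter.Eventually.of_forall hpt)
    _ = ∑ v : Fin (k+1) → Ktil, ∫ ω, Set.indicator (E v) (fun _ => f (mjExt v)) ω ∂μ :=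
        integral_finset_sum _ fun v _ => (integrable_const _).indicator (hEmeas v)
    _ = ∑ v : Fin (k+1) → Ktil, (∏ j : Fin (k+1), p (j : ℕ) (v j)) * f (mjExt v) := by
        refine Finset.sum_congr rfl fun v _ => ?_
        rw [integral_indicator_const _ (hEmeas v), measureReal_def, hEμ v, smul_eq_mul]
        congr 1
        rw [ENNReal.toReal_prod]
        exact Finset.prod_congr rfl fun j _ => ENNReal.toReal_ofReal (hp _ _)

private noncomputable def mjE {K Ktil : Type*} [Fintype Ktil] [Nonempty Ktil] {n m q : ℕ}
    (A : Ktil → K → Matrix (Fin n) (Fin n) ℝ)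
    (B : Ktil → K → Matrix (Fin n) (Fin m) ℝ)
    (C : Ktil → K → Matrix (Fin q) (Fin n) ℝ)
    (D : Ktil → K → Matrix (Fin q) (Fin m) ℝ)
    (t : Ktil → K → ℝ) (ν : ℕ → K) (s : Fin m) (k : ℕ) : ℝ :=
  ∑ v : Fin (k+1) → Ktil, (∏ j : Fin (k+1), t (v j) (ν (j : ℕ))) *
    (mjZ A B C D ν s k (mjExt v) ⬝ᵥ mjZ A B C D ν s k (mjExt v))

private noncomputable def mjV {K Ktil : Type*} [Fintype Ktil] [Nonempty Ktil] {n m : ℕ}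
    (A : Ktil → K → Matrix (Fin n) (Fin n) ℝ)
    (B : Ktil → K → Matrix (Fin n) (Fin m) ℝ)
    (t : Ktil → K → ℝ) (ν : ℕ → K) (Q : Matrix (Fin n) (Fin n) ℝ)
    (s : Fin m) (k : ℕ) : ℝ :=
  ∑ v : Fin k → Ktil, (∏ j : Fin k, t (v j) (ν (j : ℕ))) *
    (mjXi A B ν s k (mjExt v) ⬝ᵥ Q *ᵥ mjXi A B ν s k (mjExt v))

private lemma mj_dot_self_nonneg {r : ℕ} (y : Fin r → ℝ) : 0 ≤ y ⬝ᵥ y :=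
  Finset.sum_nonneg fun i _ => mul_self_nonneg _

private lemma mj_sum_snoc {Ktil : Type*} [Fintype Ktil] (N : ℕ)
    (g : (Fin (N+2) → Ktil) → ℝ) :
    ∑ v : Fin (N+2) → Ktil, g v
      = ∑ u : Fin (N+1) → Ktil, ∑ i : Ktil, g (Fin.snoc u i) := by
  rw [← Equiv.sum_comp (Fin.snocEquiv (fun _ => Ktil)) g, Fintype.sum_prod_type]
  exact Finset.sum_comm

private lemma mjExt_snoc_lt {Ktil : Type*} [Nonempty Ktil] {N : ℕ}
    (u : Fin (N+1) → Ktil) (i : Ktil) (j : ℕ) (hj : j < N+1) :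
    mjExt (Fin.snoc u i) j = mjExt u j := by
  unfold mjExt
  rw [dif_pos (Nat.lt_succ_of_lt hj), dif_pos hj]
  have h2 : (⟨j, Nat.lt_succ_of_lt hj⟩ : Fin (N+2)) = Fin.castSucc ⟨j, hj⟩ := rfl
  rw [h2, Fin.snoc_castSucc]

private lemma mjExt_snoc_last {Ktil : Type*} [Nonempty Ktil] {N : ℕ}
    (u : Fin (N+1) → Ktil) (i : Ktil) :
    mjExt (Fin.snoc u i) (N+1) = i := by
  unfold mjExt
  rw [dif_pos (Nat.lt_succ_self _)]
  have h2 : (⟨N+1, Nat.lt_succ_self _⟩ : Fin (N+2)) = Fin.last (N+1) := rfl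
  rw [h2, Fin.snoc_last]

private lemma mj_step {K Ktil : Type*} [Fintype Ktil] [Nonempty Ktil] {n m q : ℕ}
    (A : Ktil → K → Matrix (Fin n) (Fin n) ℝ)
    (B : Ktil → K → Matrix (Fin n) (Fin m) ℝ)
    (C : Ktil → K → Matrix (Fin q) (Fin n) ℝ)
    (D : Ktil → K → Matrix (Fin q) (Fin m) ℝ)
    (t : Ktil → K → ℝ) (ht : ∀ i j, 0 ≤ t i j) (ν : ℕ → K)
    (Q : Matrix (Fin n) (Fin n) ℝ)
    (hLMI₁ : ∀ j, (Q - ∑ i, t i j • ((A i j)ᵀ * Q * A i j + (C i j)ᵀ * C i j)).PosDef)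
    (s : Fin m) (N : ℕ) :
    mjE A B C D t ν s (N+1) + mjV A B t ν Q s (N+2) ≤ mjV A B t ν Q s (N+1) := by
  have hw : ∀ (u : Fin (N+1) → Ktil) (i : Ktil),
      (∏ j : Fin (N+2), t ((Fin.snoc u i : Fin (N+2) → Ktil) j) (ν (j : ℕ)))
        = (∏ j : Fin (N+1), t (u j) (ν (j : ℕ))) * t i (ν (N+1)) := by
    intro u i
    rw [Fin.prod_univ_castSucc]
    congr 1
    · exact Finset.prod_congr rfl fun j _ => by
        simp [Fin.snoc_castSucc, Fin.coe_castSucc]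
    · simp [Fin.snoc_last, Fin.val_last]
  have hxieq : ∀ (u : Fin (N+1) → Ktil) (i : Ktil),
      mjXi A B ν s (N+1) (mjExt (Fin.snoc u i)) = mjXi A B ν s (N+1) (mjExt u) :=
    fun u i => mjXi_congr _ _ _ _ _ _ _ fun j hj => mjExt_snoc_lt u i j hj
  have hZeq : ∀ (u : Fin (N+1) → Ktil) (i : Ktil),
      mjZ A B C D ν s (N+1) (mjExt (Fin.snoc u i))
        = (C i (ν (N+1))).mulVec (mjXi A B ν s (N+1) (mjExt u)) := by
    intro u i
    unfold mjZ
    rw [if_neg (Nat.succ_ne_zero N), mjExt_snoc_last, hxieq]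
  have hXeq : ∀ (u : Fin (N+1) → Ktil) (i : Ktil),
      mjXi A B ν s (N+2) (mjExt (Fin.snoc u i))
        = (A i (ν (N+1))).mulVec (mjXi A B ν s (N+1) (mjExt u)) := by
    intro u i
    show (A (mjExt (Fin.snoc u i) (N+1)) (ν (N+1))).mulVec
        (mjXi A B ν s (N+1) (mjExt (Fin.snoc u i))) = _
    rw [mjExt_snoc_last, hxieq]
  unfold mjE mjV
  rw [mj_sum_snoc, mj_sum_snoc, ← Finset.sum_add_distrib]
  refine Finset.sum_le_sum fun u _ => ?_
  rw [← Finset.sum_add_distrib]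
  have hterm : ∀ i : Ktil,
      ((∏ j : Fin (N+2), t ((Fin.snoc u i : Fin (N+2) → Ktil) j) (ν (j:ℕ))) *
        (mjZ A B C D ν s (N+1) (mjExt (Fin.snoc u i)) ⬝ᵥ
          mjZ A B C D ν s (N+1) (mjExt (Fin.snoc u i)))
      + (∏ j : Fin (N+2), t ((Fin.snoc u i : Fin (N+2) → Ktil) j) (ν (j:ℕ))) *
        (mjXi A B ν s (N+2) (mjExt (Fin.snoc u i)) ⬝ᵥ
          Q *ᵥ mjXi A B ν s (N+2) (mjExt (Fin.snoc u i))))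
      = (∏ j : Fin (N+1), t (u j) (ν (j:ℕ))) *
        (t i (ν (N+1)) *
          ((A i (ν (N+1)) *ᵥ mjXi A B ν s (N+1) (mjExt u)) ⬝ᵥ
              Q *ᵥ (A i (ν (N+1)) *ᵥ mjXi A B ν s (N+1) (mjExt u))
           + (C i (ν (N+1)) *ᵥ mjXi A B ν s (N+1) (mjExt u)) ⬝ᵥ
              (C i (ν (N+1)) *ᵥ mjXi A B ν s (N+1) (mjExt u)))) := by
    intro i
    rw [hw, hZeq, hXeq]
    ring
  rw [Finset.sum_congr rfl fun i _ => hterm i, ← Finset.mul_sum]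
  exact mul_le_mul_of_nonneg_left
    (mj_quad_le (fun i => t i (ν (N+1))) Q Q (fun i => A i (ν (N+1)))
      (fun i => C i (ν (N+1))) (hLMI₁ (ν (N+1))) _)
    (Finset.prod_nonneg fun j _ => ht _ _)

private lemma mjE_nonneg {K Ktil : Type*} [Fintype Ktil] [Nonempty Ktil] {n m q : ℕ}
    (A : Ktil → K → Matrix (Fin n) (Fin n) ℝ)
    (B : Ktil → K → Matrix (Fin n) (Fin m) ℝ)
    (C : Ktil → K → Matrix (Fin q) (Fin n) ℝ)
    (D : Ktil → K → Matrix (Fin q) (Fin m) ℝ)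
    (t : Ktil → K → ℝ) (ht : ∀ i j, 0 ≤ t i j) (ν : ℕ → K) (s : Fin m) (k : ℕ) :
    0 ≤ mjE A B C D t ν s k :=
  Finset.sum_nonneg fun v _ => mul_nonneg
    (Finset.prod_nonneg fun j _ => ht _ _) (mj_dot_self_nonneg _)

private lemma mjV_nonneg {K Ktil : Type*} [Fintype Ktil] [Nonempty Ktil] {n m : ℕ}
    (A : Ktil → K → Matrix (Fin n) (Fin n) ℝ)
    (B : Ktil → K → Matrix (Fin n) (Fin m) ℝ)
    (t : Ktil → K → ℝ) (ht : ∀ i j, 0 ≤ t i j) (ν : ℕ → K)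
    (Q : Matrix (Fin n) (Fin n) ℝ) (hQ : Q.PosSemidef) (s : Fin m) (k : ℕ) :
    0 ≤ mjV A B t ν Q s k :=
  Finset.sum_nonneg fun v _ => mul_nonneg
    (Finset.prod_nonneg fun j _ => ht _ _)
    (by simpa [star_trivial] using hQ.dotProduct_mulVec_nonneg (mjXi A B ν s k (mjExt v)))

private lemma mj_base {K Ktil : Type*} [Fintype Ktil] [Nonempty Ktil] {n m q : ℕ}
    (A : Ktil → K → Matrix (Fin n) (Fin n) ℝ)
    (B : Ktil → K → Matrix (Fin n) (Fin m) ℝ)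
    (C : Ktil → K → Matrix (Fin q) (Fin n) ℝ)
    (D : Ktil → K → Matrix (Fin q) (Fin m) ℝ)
    (t : Ktil → K → ℝ) (ht : ∀ i j, 0 ≤ t i j) (ν : ℕ → K)
    (Q : Matrix (Fin n) (Fin n) ℝ) (Z : Matrix (Fin m) (Fin m) ℝ)
    (hLMI₂ : ∀ j, (Z - ∑ i, t i j • ((B i j)ᵀ * Q * B i j + (D i j)ᵀ * D i j)).PosDef)
    (s : Fin m) :
    mjE A B C D t ν s 0 + mjV A B t ν Q s 1 ≤ Z s s := by
  have hsum : ∀ g : (Fin 1 → Ktil) → ℝ,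
      ∑ v : Fin 1 → Ktil, g v = ∑ i : Ktil, g (fun _ => i) := by
    intro g
    refine Fintype.sum_equiv (Equiv.funUnique (Fin 1) Ktil) g (fun i => g (fun _ => i))
      (fun v => ?_)
    congr 1
    funext j
    rw [Subsingleton.elim j default]
    rfl
  have hD : ∀ i : Ktil, mjZ A B C D ν s 0 (mjExt (fun _ : Fin 1 => i))
      = (D i (ν 0)).mulVec (Pi.single s 1) := by
    intro i; unfold mjZ; rw [if_pos rfl]; simp [mjExt]
  have hB : ∀ i : Ktil, mjXi A B ν s 1 (mjExt (fun _ : Fin 1 => i))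
      = (B i (ν 0)).mulVec (Pi.single s 1) := by
    intro i; simp [mjXi, mjExt]
  have hquad := mj_quad_le (fun i => t i (ν 0)) Q Z (fun i => B i (ν 0))
    (fun i => D i (ν 0)) (hLMI₂ (ν 0)) (Pi.single s 1)
  have hrhs : (Pi.single s 1 : Fin m → ℝ) ⬝ᵥ Z *ᵥ Pi.single s 1 = Z s s := by
    rw [mulVec_single, single_dotProduct]
    simp
  unfold mjE mjV
  rw [hsum, hsum, ← Finset.sum_add_distrib, ← hrhs]
  refine le_trans (le_of_eq (Finset.sum_congr rfl fun i _ => ?_)) hquad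
  rw [hD, hB]
  have hprod : ∀ i : Ktil, (∏ j : Fin 1, t ((fun _ : Fin 1 => i) j) (ν (j : ℕ))) = t i (ν 0) := by
    intro i; simp
  rw [hprod]
  ring

/-- (`H₂` performance of switched Markov jump linear systems.) Consider a
switched MJLS with finite mode sets `K`, `K̃`, matrices `A i j, B i j, C i j, D i j` and
probabilities `t i j ≥ 0` with `Σ_i t i j = 1`, and let `γ > 0`. Suppose there are a symmetric
positive definite `Q` and a symmetric `Z` with `trace Z < γ²` such that for every `j`,
`Σ_i t i j • (A i jᵀ Q A i j + C i jᵀ C i j) ≺ Q` and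
`Σ_i t i j • (B i jᵀ Q B i j + D i jᵀ D i j) ≺ Z`.  Then for every deterministic switching
sequence `ν` and every sequence `σ` of mutually independent `K̃`-valued random variables with
`ℙ(σ k = i) = t i (ν k)`, the total impulse-response energy satisfies
`Σ_{s} Σ_{k} E[‖z_k^{ν,s}‖²] < γ²`, where `z_0^{ν,s} = D (σ 0) (ν 0) e_s`,
`ξ_1^s = B (σ 0) (ν 0) e_s`, and for `k ≥ 1`, `ξ_{k+1}^s = A (σ k) (ν k) ξ_k^s` and
`z_k^{ν,s} = C (σ k) (ν k) ξ_k^s`. -/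
theorem switched_mjls_h2_bound
    {K Ktil : Type*} [Fintype K] [Fintype Ktil] [Nonempty K] [Nonempty Ktil]
    [MeasurableSpace Ktil] [MeasurableSingletonClass Ktil]
    {n m q : ℕ}
    (A : Ktil → K → Matrix (Fin n) (Fin n) ℝ)
    (B : Ktil → K → Matrix (Fin n) (Fin m) ℝ)
    (C : Ktil → K → Matrix (Fin q) (Fin n) ℝ)
    (D : Ktil → K → Matrix (Fin q) (Fin m) ℝ)
    (t : Ktil → K → ℝ)
    (ht : ∀ i j, 0 ≤ t i j) (htsum : ∀ j, ∑ i, t i j = 1)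
    (γ : ℝ) (hγ : 0 < γ)
    (Q : Matrix (Fin n) (Fin n) ℝ) (hQsymm : Q.IsSymm) (hQ : Q.PosDef)
    (Z : Matrix (Fin m) (Fin m) ℝ) (hZsymm : Z.IsSymm) (hZtr : Z.trace < γ ^ 2)
    (hLMI₁ : ∀ j,
      (Q - ∑ i, t i j • ((A i j)ᵀ * Q * A i j + (C i j)ᵀ * C i j)).PosDef)
    (hLMI₂ : ∀ j,
      (Z - ∑ i, t i j • ((B i j)ᵀ * Q * B i j + (D i j)ᵀ * D i j)).PosDef)
    {Ω : Type*} [MeasurableSpace Ω] (μ : Measure Ω) [IsProbabilityMeasure μ]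
    (ν : ℕ → K) (σ : ℕ → Ω → Ktil)
    (hσmeas : ∀ k, Measurable (σ k))
    (hσindep : iIndepFun σ μ)
    (hσdist : ∀ k i, μ {ω | σ k ω = i} = ENNReal.ofReal (t i (ν k)))
    (ξ : Fin m → ℕ → Ω → Fin n → ℝ) (z : Fin m → ℕ → Ω → Fin q → ℝ)
    (hz₀ : ∀ s ω, z s 0 ω = (D (σ 0 ω) (ν 0)).mulVec (Pi.single s 1))
    (hξ₁ : ∀ s ω, ξ s 1 ω = (B (σ 0 ω) (ν 0)).mulVec (Pi.single s 1))
    (hrec : ∀ s k, 1 ≤ k → ∀ ω, ξ s (k + 1) ω = (A (σ k ω) (ν k)).mulVec (ξ s k ω))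
    (hout : ∀ s k, 1 ≤ k → ∀ ω, z s k ω = (C (σ k ω) (ν k)).mulVec (ξ s k ω)) :
    ∑ s : Fin m, ∑' k : ℕ, ∫ ω, z s k ω ⬝ᵥ z s k ω ∂μ < γ ^ 2 := by
  classical
  have hxi : ∀ s k, 1 ≤ k → ∀ ω, ξ s k ω = mjXi A B ν s k (fun j => σ j ω) := by
    intro s k hk
    induction k, hk using Nat.le_induction with
    | base => intro ω; rw [hξ₁]; rfl
    | succ k hk ih =>
      intro ω
      rw [hrec s k hk ω, ih ω]
      cases k with
      | zero => exact absurd hk (by norm_num)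
      | succ k' => rfl
  have hz : ∀ s k ω, z s k ω = mjZ A B C D ν s k (fun j => σ j ω) := by
    intro s k ω
    cases k with
    | zero => rw [hz₀]; unfold mjZ; rw [if_pos rfl]
    | succ k =>
      rw [hout s (k+1) (Nat.succ_le_succ (Nat.zero_le k)) ω,
        hxi s (k+1) (Nat.succ_le_succ (Nat.zero_le k)) ω]
      unfold mjZ
      rw [if_neg (Nat.succ_ne_zero k)]
  have hdep : ∀ s k (c c' : ℕ → Ktil), (∀ j, j ≤ k → c j = c' j) →
      mjZ A B C D ν s k c = mjZ A B C D ν s k c' := by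
    intro s k c c' h
    cases k with
    | zero => unfold mjZ; rw [if_pos rfl, if_pos rfl, h 0 le_rfl]
    | succ k =>
      unfold mjZ
      rw [if_neg (Nat.succ_ne_zero k), if_neg (Nat.succ_ne_zero k), h (k+1) le_rfl,
        mjXi_congr A B ν s (k+1) c c' (fun j hj => h j (le_of_lt hj))]
  have hE : ∀ s k, ∫ ω, z s k ω ⬝ᵥ z s k ω ∂μ = mjE A B C D t ν s k := by
    intro s k
    have hint := mj_integral_eq μ σ hσmeas hσindep (fun k i => t i (ν k))
      (fun k i => ht i (ν k)) hσdist k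
      (fun c => mjZ A B C D ν s k c ⬝ᵥ mjZ A B C D ν s k c)
      (fun c c' h => by simp only [hdep s k c c' h])
    calc ∫ ω, z s k ω ⬝ᵥ z s k ω ∂μ
        = ∫ ω, (fun c => mjZ A B C D ν s k c ⬝ᵥ mjZ A B C D ν s k c)
            (fun j => σ j ω) ∂μ :=
          integral_congr_ae (Filter.Eventually.of_forall fun ω => by simp only [hz s k ω])
      _ = mjE A B C D t ν s k := by rw [hint]; rfl
  have hkey : ∀ (s : Fin m) (N : ℕ),
      (∑ k ∈ Finset.range (N+1), mjE A B C D t ν s k) + mjV A B t ν Q s (N+1)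
        ≤ Z s s := by
    intro s N
    induction N with
    | zero => simpa using mj_base A B C D t ht ν Q Z hLMI₂ s
    | succ N ih =>
      rw [Finset.sum_range_succ]
      have hstep := mj_step A B C D t ht ν Q hLMI₁ s N
      linarith
  have hpartial : ∀ (s : Fin m) (N : ℕ),
      ∑ k ∈ Finset.range N, mjE A B C D t ν s k ≤ Z s s := by
    intro s N
    have h1 : ∑ k ∈ Finset.range N, mjE A B C D t ν s k
        ≤ ∑ k ∈ Finset.range (N+1), mjE A B C D t ν s k :=
      Finset.sum_le_sum_of_subset_of_nonneg (Finset.range_subset_range.2 (Nat.le_succ N))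
        (fun k _ _ => mjE_nonneg A B C D t ht ν s k)
    have h2 := hkey s N
    have h3 := mjV_nonneg A B t ht ν Q hQ.posSemidef s (N+1)
    linarith
  have htsum : ∀ s : Fin m, ∑' k : ℕ, ∫ ω, z s k ω ⬝ᵥ z s k ω ∂μ ≤ Z s s := by
    intro s
    have heq : (fun k => ∫ ω, z s k ω ⬝ᵥ z s k ω ∂μ) = fun k => mjE A B C D t ν s k :=
      funext (hE s)
    rw [heq]
    exact Real.tsum_le_of_sum_range_le (fun k => mjE_nonneg A B C D t ht ν s k)
      (hpartial s)
  calc ∑ s : Fin m, ∑' k : ℕ, ∫ ω, z s k ω ⬝ᵥ z s k ω ∂μ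
      ≤ ∑ s : Fin m, Z s s := Finset.sum_le_sum fun s _ => htsum s
    _ = Z.trace := by simp [Matrix.trace, Matrix.diag]
    _ < γ ^ 2 := hZtr
end

section
/- Let Q be a symmetric positive definite n×n real matrix, ε > 0, and b ∈ ℝⁿ. On a probability space, let (A_k)_{k≥1} and (C_k)_{k≥1} be sequences of random matrices in ℝ^{n×n} and ℝ^{q×n} respectively such that: (i) for each k ≥ 1, the pair (A_k, C_k) is independent of (A_1, C_1, …, A_{k−1}, C_{k−1}); (ii) for each k ≥ 1, E[A_kᵀ Q A_k + C_kᵀ C_k] ⪯ Q − ε·I. Define ξ_1 = b and ξ_{k+1} = A_k ξ_k for k ≥ 1. Then Σ_{k=1}^{∞} E[‖C_k ξ_k‖²] ≤ bᵀ Q b. -/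
open MeasureTheory ProbabilityTheory Matrix

lemma integrable_mul_of_memL2 {Ω : Type*} [MeasurableSpace Ω] {μ : Measure Ω}
    {f g : Ω → ℝ} (hf : MemLp f 2 μ) (hg : MemLp g 2 μ) :
    Integrable (fun ω => f ω * g ω) μ := by
  have hb : Integrable (fun ω => f ω ^ 2 + g ω ^ 2) μ := hf.integrable_sq.add hg.integrable_sq
  refine hb.mono' (hf.aestronglyMeasurable.mul hg.aestronglyMeasurable)
    (Filter.Eventually.of_forall fun ω => ?_)
  rw [Real.norm_eq_abs, abs_mul]
  nlinarith [abs_nonneg (f ω), abs_nonneg (g ω), sq_nonneg (|f ω| - |g ω|), sq_abs (f ω),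
    sq_abs (g ω)]

/-- deterministic chain: `chainAux n b m t = t_{m-1} * ⋯ * t_0 * b`. -/
def chainAux (n : ℕ) (b : Fin n → ℝ) : (m : ℕ) → (Fin m → (Fin n → Fin n → ℝ)) → (Fin n → ℝ)
  | 0, _ => b
  | m + 1, t => Matrix.mulVec (Matrix.of (t (Fin.last m))) (chainAux n b m (t ∘ Fin.castSucc))

lemma measurable_chainAux (n : ℕ) (b : Fin n → ℝ) :
    ∀ m, Measurable (chainAux n b m) := by
  intro m
  induction m with
  | zero => exact measurable_const
  | succ m ih =>
    apply measurable_pi_lambda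
    intro i
    have h1 : Measurable fun t : Fin (m+1) → (Fin n → Fin n → ℝ) => t ∘ Fin.castSucc :=
      measurable_pi_lambda _ fun l => measurable_pi_apply _
    have : (fun t : Fin (m+1) → (Fin n → Fin n → ℝ) => chainAux n b (m+1) t i)
        = fun t => ∑ j, t (Fin.last m) i j * chainAux n b m (t ∘ Fin.castSucc) j := by
      funext t; simp [chainAux, Matrix.mulVec, dotProduct]
    rw [this]
    exact Finset.measurable_sum _ fun j _ =>
      (((measurable_pi_apply _).comp (measurable_pi_apply (Fin.last m))).eval.mul
        ((measurable_pi_apply j).comp ((ih.comp h1))))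

lemma dot_quad {n : ℕ} (M : Matrix (Fin n) (Fin n) ℝ) (x : Fin n → ℝ) :
    x ⬝ᵥ M.mulVec x = ∑ a, ∑ c, (x a * x c) * M a c := by
  simp only [dotProduct, Matrix.mulVec, Finset.mul_sum]
  exact Finset.sum_congr rfl fun a _ => Finset.sum_congr rfl fun c _ => by ring

lemma quadA_expand {n : ℕ} (Q : Matrix (Fin n) (Fin n) ℝ)
    (Am : Matrix (Fin n) (Fin n) ℝ) (x : Fin n → ℝ) :
    Am.mulVec x ⬝ᵥ Q.mulVec (Am.mulVec x) = ∑ a, ∑ c, (x a * x c) * ((Amᵀ * Q * Am) a c) := by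
  have h1 : Am.mulVec x ⬝ᵥ Q.mulVec (Am.mulVec x) = x ⬝ᵥ (Amᵀ * Q * Am).mulVec x := by
    rw [← Matrix.mulVec_mulVec, ← Matrix.mulVec_mulVec, Matrix.dotProduct_mulVec x,
      Matrix.vecMul_transpose]
  rw [h1, dot_quad]

lemma quadC_expand {n q : ℕ} (Cm : Matrix (Fin q) (Fin n) ℝ) (x : Fin n → ℝ) :
    Cm.mulVec x ⬝ᵥ Cm.mulVec x = ∑ a, ∑ c, (x a * x c) * ((Cmᵀ * Cm) a c) := by
  have h2 : Cm.mulVec x ⬝ᵥ Cm.mulVec x = x ⬝ᵥ (Cmᵀ * Cm).mulVec x := by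
    rw [← Matrix.mulVec_mulVec, Matrix.dotProduct_mulVec x, Matrix.vecMul_transpose]
  rw [h2, dot_quad]

lemma mulVec_entry_mul_expand {n : ℕ} (Am : Matrix (Fin n) (Fin n) ℝ) (x : Fin n → ℝ)
    (a c : Fin n) :
    (Am.mulVec x) a * (Am.mulVec x) c = ∑ u, ∑ v, (x u * x v) * (Am a u * Am c v) := by
  simp only [Matrix.mulVec, dotProduct, Finset.sum_mul_sum]
  exact Finset.sum_congr rfl fun u _ => Finset.sum_congr rfl fun v _ => by ring

/-- Let `Q` be symmetric positive definite, `ε > 0` and `b ∈ ℝⁿ`. Let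
`(A_k)_{k ≥ 1}`, `(C_k)_{k ≥ 1}` be square-integrable random matrices such that each pair
`(A_k, C_k)` is independent of the preceding pairs `(A_1, C_1, …, A_{k-1}, C_{k-1})` and
`E[A_kᵀ Q A_k + C_kᵀ C_k] ⪯ Q - ε • I` for every `k ≥ 1`. For the process `ξ_1 = b`,
`ξ_{k+1} = A_k ξ_k` (`k ≥ 1`), the output energy satisfies
`Σ_{k=1}^∞ E[‖C_k ξ_k‖²] ≤ bᵀ Q b`. -/
theorem output_energy_le_quadratic_form
    {Ω : Type*} [MeasurableSpace Ω] (μ : Measure Ω) [IsProbabilityMeasure μ]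
    {n q : ℕ}
    (Q : Matrix (Fin n) (Fin n) ℝ) (hQsymm : Q.IsSymm) (hQ : Q.PosDef)
    (ε : ℝ) (hε : 0 < ε) (b : Fin n → ℝ)
    (A : ℕ → Ω → Matrix (Fin n) (Fin n) ℝ)
    (C : ℕ → Ω → Matrix (Fin q) (Fin n) ℝ)
    (hAmeas : ∀ k, Measurable fun ω i j => A k ω i j)
    (hCmeas : ∀ k, Measurable fun ω i j => C k ω i j)
    (hA2 : ∀ k i j, MemLp (fun ω => A k ω i j) 2 μ)
    (hC2 : ∀ k i j, MemLp (fun ω => C k ω i j) 2 μ)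
    (hindep : ∀ k, 1 ≤ k →
      IndepFun (fun ω => ((fun i j => A k ω i j), fun i j => C k ω i j))
        (fun ω => fun l : Fin (k - 1) =>
          ((fun i j => A (l.val + 1) ω i j), fun i j => C (l.val + 1) ω i j)) μ)
    (hLMI : ∀ k, 1 ≤ k →
      (Q - ε • (1 : Matrix (Fin n) (Fin n) ℝ) -
        Matrix.of fun i j =>
          ∫ ω, ((A k ω)ᵀ * Q * A k ω + (C k ω)ᵀ * C k ω) i j ∂μ).PosSemidef)
    (ξ : ℕ → Ω → Fin n → ℝ)
    (hξ₁ : ∀ ω, ξ 1 ω = b)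
    (hrec : ∀ k, 1 ≤ k → ∀ ω, ξ (k + 1) ω = (A k ω).mulVec (ξ k ω)) :
    ∑' k : ℕ,
        ∫ ω, (C (k + 1) ω).mulVec (ξ (k + 1) ω) ⬝ᵥ (C (k + 1) ω).mulVec (ξ (k + 1) ω) ∂μ ≤
      b ⬝ᵥ Q.mulVec b := by
  classical
  -- ξ (m+1) as a function of the past pairs
  have hξ_eq : ∀ m ω, ξ (m + 1) ω = chainAux n b m (fun l : Fin m => A (l.val + 1) ω) := by
    intro m
    induction m with
    | zero => intro ω; rw [hξ₁]; rfl
    | succ m ih =>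
      intro ω
      rw [hrec (m + 1) (Nat.succ_le_succ (Nat.zero_le m)) ω, ih ω]
      rfl
  -- independence of functions of the new pair and functions of ξ
  have hIndepC : ∀ (m : ℕ) (g1 : ((Fin n → Fin n → ℝ) × (Fin q → Fin n → ℝ)) → ℝ)
      (g2 : (Fin n → ℝ) → ℝ), Measurable g1 → Measurable g2 →
      IndepFun (fun ω => g1 (A (m + 1) ω, C (m + 1) ω)) (fun ω => g2 (ξ (m + 1) ω)) μ := by
    intro m g1 g2 hg1 hg2
    have hF : Measurable (fun t : Fin m → ((Fin n → Fin n → ℝ) × (Fin q → Fin n → ℝ)) =>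
        chainAux n b m (fun l => (t l).1)) :=
      (measurable_chainAux n b m).comp
        (measurable_pi_lambda _ fun l => (measurable_pi_apply l).fst)
    have h := (hindep (m + 1) (Nat.succ_le_succ (Nat.zero_le m))).comp hg1 (hg2.comp hF)
    simp only [hξ_eq]
    exact h
  -- integrability of products of coordinates of ξ
  have hξInt : ∀ m a c, Integrable (fun ω => ξ (m + 1) ω a * ξ (m + 1) ω c) μ := by
    intro m
    induction m with
    | zero =>
      intro a c
      have : (fun ω => ξ 1 ω a * ξ 1 ω c) = fun _ => b a * b c := by
        funext ω; rw [hξ₁]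
      rw [this]; exact integrable_const _
    | succ m ih =>
      intro a c
      have he : (fun ω => ξ (m + 2) ω a * ξ (m + 2) ω c)
          = fun ω => ∑ u, ∑ v, (ξ (m + 1) ω u * ξ (m + 1) ω v)
              * (A (m + 1) ω a u * A (m + 1) ω c v) := by
        funext ω
        rw [hrec (m + 1) (Nat.succ_le_succ (Nat.zero_le m)) ω]
        exact mulVec_entry_mul_expand _ _ a c
      rw [he]
      refine integrable_finset_sum _ fun u _ => integrable_finset_sum _ fun v _ => ?_
      have hg1 : Measurable (fun p : ((Fin n → Fin n → ℝ) × (Fin q → Fin n → ℝ)) =>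
          p.1 a u * p.1 c v) :=
        by fun_prop
      have hg2 : Measurable (fun x : Fin n → ℝ => x u * x v) :=
        (measurable_pi_apply u).mul (measurable_pi_apply v)
      have hi := (hIndepC m (fun p => p.1 a u * p.1 c v) (fun x => x u * x v) hg1 hg2).symm
      exact hi.integrable_mul (ih u v)
        (integrable_mul_of_memL2 (hA2 (m + 1) a u) (hA2 (m + 1) c v))
  -- factorization of expectations
  have hfact : ∀ (m : ℕ) (g1 : ((Fin n → Fin n → ℝ) × (Fin q → Fin n → ℝ)) → ℝ),
      Measurable g1 → Integrable (fun ω => g1 (A (m + 1) ω, C (m + 1) ω)) μ → ∀ a c,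
      Integrable (fun ω => (ξ (m + 1) ω a * ξ (m + 1) ω c) * g1 (A (m + 1) ω, C (m + 1) ω)) μ ∧
      ∫ ω, (ξ (m + 1) ω a * ξ (m + 1) ω c) * g1 (A (m + 1) ω, C (m + 1) ω) ∂μ
        = (∫ ω, ξ (m + 1) ω a * ξ (m + 1) ω c ∂μ)
          * ∫ ω, g1 (A (m + 1) ω, C (m + 1) ω) ∂μ := by
    intro m g1 hg1 hint a c
    have hg2 : Measurable (fun x : Fin n → ℝ => x a * x c) :=
      (measurable_pi_apply a).mul (measurable_pi_apply c)
    have hi := (hIndepC m g1 (fun x => x a * x c) hg1 hg2).symm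
    exact ⟨hi.integrable_mul (hξInt m a c) hint,
      hi.integral_fun_mul_eq_mul_integral (hξInt m a c).aestronglyMeasurable hint.aestronglyMeasurable⟩
  -- measurability and integrability of matrix entries
  have hg1A : ∀ a c : Fin n, Measurable (fun p : ((Fin n → Fin n → ℝ) × (Fin q → Fin n → ℝ)) =>
      ((Matrix.of p.1)ᵀ * Q * Matrix.of p.1) a c) := by
    intro a c
    have : (fun p : ((Fin n → Fin n → ℝ) × (Fin q → Fin n → ℝ)) =>
        ((Matrix.of p.1)ᵀ * Q * Matrix.of p.1) a c)
        = fun p => ∑ v, (∑ u, p.1 u a * Q u v) * p.1 v c := by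
      funext p
      simp [Matrix.mul_apply, Matrix.transpose_apply]
    rw [this]
    exact Finset.measurable_sum _ fun v _ =>
      by fun_prop
  have hg1C : ∀ a c : Fin n, Measurable (fun p : ((Fin n → Fin n → ℝ) × (Fin q → Fin n → ℝ)) =>
      ((Matrix.of p.2)ᵀ * Matrix.of p.2) a c) := by
    intro a c
    have : (fun p : ((Fin n → Fin n → ℝ) × (Fin q → Fin n → ℝ)) =>
        ((Matrix.of p.2)ᵀ * Matrix.of p.2) a c)
        = fun p => ∑ u, p.2 u a * p.2 u c := by
      funext p
      simp [Matrix.mul_apply, Matrix.transpose_apply]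
    rw [this]
    exact Finset.measurable_sum _ fun u _ => by fun_prop
  have hWA : ∀ (k : ℕ) (a c : Fin n),
      Integrable (fun ω => ((A k ω)ᵀ * Q * A k ω) a c) μ := by
    intro k a c
    have : (fun ω => ((A k ω)ᵀ * Q * A k ω) a c)
        = fun ω => ∑ v, ∑ u, Q u v * (A k ω u a * A k ω v c) := by
      funext ω
      simp only [Matrix.mul_apply, Matrix.transpose_apply, Finset.sum_mul]
      exact Finset.sum_congr rfl fun v _ => Finset.sum_congr rfl fun u _ => by ring
    rw [this]
    exact integrable_finset_sum _ fun v _ => integrable_finset_sum _ fun u _ =>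
      (integrable_mul_of_memL2 (hA2 k u a) (hA2 k v c)).const_mul _
  have hWC : ∀ (k : ℕ) (a c : Fin n),
      Integrable (fun ω => ((C k ω)ᵀ * C k ω) a c) μ := by
    intro k a c
    have : (fun ω => ((C k ω)ᵀ * C k ω) a c)
        = fun ω => ∑ u, C k ω u a * C k ω u c := by
      funext ω; simp [Matrix.mul_apply, Matrix.transpose_apply]
    rw [this]
    exact integrable_finset_sum _ fun u _ => integrable_mul_of_memL2 (hC2 k u a) (hC2 k u c)
  -- integrability of quadratic forms in ξ with constant matrices
  have hQFint : ∀ (M : Matrix (Fin n) (Fin n) ℝ) (m : ℕ),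
      Integrable (fun ω => ξ (m + 1) ω ⬝ᵥ M.mulVec (ξ (m + 1) ω)) μ := by
    intro M m
    have : (fun ω => ξ (m + 1) ω ⬝ᵥ M.mulVec (ξ (m + 1) ω))
        = fun ω => ∑ a, ∑ c, (ξ (m + 1) ω a * ξ (m + 1) ω c) * M a c := by
      funext ω; exact dot_quad M _
    rw [this]
    exact integrable_finset_sum _ fun a _ => integrable_finset_sum _ fun c _ =>
      (hξInt m a c).mul_const _
  -- abbreviations
  set V : ℕ → ℝ := fun m => ∫ ω, ξ (m + 1) ω ⬝ᵥ Q.mulVec (ξ (m + 1) ω) ∂μ with hV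
  set G : ℕ → ℝ := fun m =>
    ∫ ω, (C (m + 1) ω).mulVec (ξ (m + 1) ω) ⬝ᵥ (C (m + 1) ω).mulVec (ξ (m + 1) ω) ∂μ with hG
  -- key inequality
  have hone : ∀ m : ℕ, 1 ≤ m + 1 := fun m => Nat.succ_le_succ (Nat.zero_le m)
  have key : ∀ m, V (m + 1) + G m ≤ V m := by
    intro m
    set N : Matrix (Fin n) (Fin n) ℝ := Matrix.of (fun a c =>
      ∫ ω, ((A (m + 1) ω)ᵀ * Q * A (m + 1) ω + (C (m + 1) ω)ᵀ * C (m + 1) ω) a c ∂μ) with hN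
    -- the A-part
    have eA : V (m + 1) = ∑ a, ∑ c, (∫ ω, ξ (m + 1) ω a * ξ (m + 1) ω c ∂μ)
        * ∫ ω, ((A (m + 1) ω)ᵀ * Q * A (m + 1) ω) a c ∂μ := by
      have h1 : (fun ω => ξ (m + 1 + 1) ω ⬝ᵥ Q.mulVec (ξ (m + 1 + 1) ω))
          = fun ω => ∑ a, ∑ c, (ξ (m + 1) ω a * ξ (m + 1) ω c)
              * ((A (m + 1) ω)ᵀ * Q * A (m + 1) ω) a c := by
        funext ω
        rw [hrec (m + 1) (hone m) ω]
        exact quadA_expand Q _ _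
      have hIab : ∀ a c : Fin n, Integrable (fun ω => (ξ (m + 1) ω a * ξ (m + 1) ω c)
          * ((A (m + 1) ω)ᵀ * Q * A (m + 1) ω) a c) μ := fun a c =>
        (hfact m (fun p => ((Matrix.of p.1)ᵀ * Q * Matrix.of p.1) a c) (hg1A a c)
          (hWA (m + 1) a c) a c).1
      calc V (m + 1) = ∫ ω, ∑ a, ∑ c, (ξ (m + 1) ω a * ξ (m + 1) ω c)
              * ((A (m + 1) ω)ᵀ * Q * A (m + 1) ω) a c ∂μ := by simp only [hV]; rw [h1]
        _ = ∑ a, ∫ ω, ∑ c, (ξ (m + 1) ω a * ξ (m + 1) ω c)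
              * ((A (m + 1) ω)ᵀ * Q * A (m + 1) ω) a c ∂μ :=
            integral_finset_sum _ fun a _ => integrable_finset_sum _ fun c _ => hIab a c
        _ = ∑ a, ∑ c, ∫ ω, (ξ (m + 1) ω a * ξ (m + 1) ω c)
              * ((A (m + 1) ω)ᵀ * Q * A (m + 1) ω) a c ∂μ :=
            Finset.sum_congr rfl fun a _ => integral_finset_sum _ fun c _ => hIab a c
        _ = ∑ a, ∑ c, (∫ ω, ξ (m + 1) ω a * ξ (m + 1) ω c ∂μ)
              * ∫ ω, ((A (m + 1) ω)ᵀ * Q * A (m + 1) ω) a c ∂μ :=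
            Finset.sum_congr rfl fun a _ => Finset.sum_congr rfl fun c _ =>
              (hfact m (fun p => ((Matrix.of p.1)ᵀ * Q * Matrix.of p.1) a c) (hg1A a c)
                (hWA (m + 1) a c) a c).2
    -- the C-part
    have eC : G m = ∑ a, ∑ c, (∫ ω, ξ (m + 1) ω a * ξ (m + 1) ω c ∂μ)
        * ∫ ω, ((C (m + 1) ω)ᵀ * C (m + 1) ω) a c ∂μ := by
      have h1 : (fun ω => (C (m + 1) ω).mulVec (ξ (m + 1) ω) ⬝ᵥ
            (C (m + 1) ω).mulVec (ξ (m + 1) ω))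
          = fun ω => ∑ a, ∑ c, (ξ (m + 1) ω a * ξ (m + 1) ω c)
              * ((C (m + 1) ω)ᵀ * C (m + 1) ω) a c := by
        funext ω
        exact quadC_expand _ _
      have hIab : ∀ a c : Fin n, Integrable (fun ω => (ξ (m + 1) ω a * ξ (m + 1) ω c)
          * ((C (m + 1) ω)ᵀ * C (m + 1) ω) a c) μ := fun a c =>
        (hfact m (fun p => ((Matrix.of p.2)ᵀ * Matrix.of p.2) a c) (hg1C a c)
          (hWC (m + 1) a c) a c).1
      calc G m = ∫ ω, ∑ a, ∑ c, (ξ (m + 1) ω a * ξ (m + 1) ω c)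
              * ((C (m + 1) ω)ᵀ * C (m + 1) ω) a c ∂μ := by simp only [hG]; rw [h1]
        _ = ∑ a, ∫ ω, ∑ c, (ξ (m + 1) ω a * ξ (m + 1) ω c)
              * ((C (m + 1) ω)ᵀ * C (m + 1) ω) a c ∂μ :=
            integral_finset_sum _ fun a _ => integrable_finset_sum _ fun c _ => hIab a c
        _ = ∑ a, ∑ c, ∫ ω, (ξ (m + 1) ω a * ξ (m + 1) ω c)
              * ((C (m + 1) ω)ᵀ * C (m + 1) ω) a c ∂μ :=
            Finset.sum_congr rfl fun a _ => integral_finset_sum _ fun c _ => hIab a c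
        _ = ∑ a, ∑ c, (∫ ω, ξ (m + 1) ω a * ξ (m + 1) ω c ∂μ)
              * ∫ ω, ((C (m + 1) ω)ᵀ * C (m + 1) ω) a c ∂μ :=
            Finset.sum_congr rfl fun a _ => Finset.sum_congr rfl fun c _ =>
              (hfact m (fun p => ((Matrix.of p.2)ᵀ * Matrix.of p.2) a c) (hg1C a c)
                (hWC (m + 1) a c) a c).2
    -- combine into the quadratic form with matrix N
    have eSum : V (m + 1) + G m = ∫ ω, ξ (m + 1) ω ⬝ᵥ N.mulVec (ξ (m + 1) ω) ∂μ := by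
      have hNval : ∀ a c, N a c = (∫ ω, ((A (m + 1) ω)ᵀ * Q * A (m + 1) ω) a c ∂μ)
          + ∫ ω, ((C (m + 1) ω)ᵀ * C (m + 1) ω) a c ∂μ := by
        intro a c
        simp only [hN, Matrix.of_apply]
        have : (fun ω => ((A (m + 1) ω)ᵀ * Q * A (m + 1) ω + (C (m + 1) ω)ᵀ * C (m + 1) ω) a c)
            = fun ω => ((A (m + 1) ω)ᵀ * Q * A (m + 1) ω) a c
                + ((C (m + 1) ω)ᵀ * C (m + 1) ω) a c := by
          funext ω; simp [Matrix.add_apply]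
        rw [this]
        exact integral_add (hWA (m + 1) a c) (hWC (m + 1) a c)
      have h2 : (fun ω => ξ (m + 1) ω ⬝ᵥ N.mulVec (ξ (m + 1) ω))
          = fun ω => ∑ a, ∑ c, (ξ (m + 1) ω a * ξ (m + 1) ω c) * N a c := by
        funext ω; exact dot_quad N _
      rw [eA, eC, h2]
      calc (∑ a, ∑ c, (∫ ω, ξ (m + 1) ω a * ξ (m + 1) ω c ∂μ)
              * ∫ ω, ((A (m + 1) ω)ᵀ * Q * A (m + 1) ω) a c ∂μ)
            + ∑ a, ∑ c, (∫ ω, ξ (m + 1) ω a * ξ (m + 1) ω c ∂μ)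
              * ∫ ω, ((C (m + 1) ω)ᵀ * C (m + 1) ω) a c ∂μ
          = ∑ a, ∑ c, (∫ ω, ξ (m + 1) ω a * ξ (m + 1) ω c ∂μ) * N a c := by
            rw [← Finset.sum_add_distrib]
            refine Finset.sum_congr rfl fun a _ => ?_
            rw [← Finset.sum_add_distrib]
            refine Finset.sum_congr rfl fun c _ => ?_
            rw [hNval a c, mul_add]
        _ = ∑ a, ∑ c, ∫ ω, (ξ (m + 1) ω a * ξ (m + 1) ω c) * N a c ∂μ :=
            Finset.sum_congr rfl fun a _ => Finset.sum_congr rfl fun c _ =>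
              (integral_mul_const _ _).symm
        _ = ∑ a, ∫ ω, ∑ c, (ξ (m + 1) ω a * ξ (m + 1) ω c) * N a c ∂μ :=
            Finset.sum_congr rfl fun a _ => (integral_finset_sum _ fun c _ =>
              (hξInt m a _).mul_const _).symm
        _ = ∫ ω, ∑ a, ∑ c, (ξ (m + 1) ω a * ξ (m + 1) ω c) * N a c ∂μ :=
            (integral_finset_sum _ fun a _ => integrable_finset_sum _ fun c _ =>
              (hξInt m a _).mul_const _).symm
    -- the LMI step
    have hR := hLMI (m + 1) (hone m)
    have hmono : ∫ ω, ξ (m + 1) ω ⬝ᵥ N.mulVec (ξ (m + 1) ω) ∂μ ≤ V m := by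
      simp only [hV]
      refine integral_mono (hQFint N m) (hQFint Q m) fun ω => ?_
      have h0 : (0:ℝ) ≤ ξ (m + 1) ω ⬝ᵥ (Q - ε • (1 : Matrix (Fin n) (Fin n) ℝ) - N).mulVec
          (ξ (m + 1) ω) := by
        have := hR.dotProduct_mulVec_nonneg (ξ (m + 1) ω)
        simpa [hN] using this
      have hxx : (0:ℝ) ≤ ξ (m + 1) ω ⬝ᵥ ξ (m + 1) ω :=
        Finset.sum_nonneg fun i _ => mul_self_nonneg _
      have hexp : ξ (m + 1) ω ⬝ᵥ (Q - ε • (1 : Matrix (Fin n) (Fin n) ℝ) - N).mulVec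
            (ξ (m + 1) ω)
          = ξ (m + 1) ω ⬝ᵥ Q.mulVec (ξ (m + 1) ω) - ε * (ξ (m + 1) ω ⬝ᵥ ξ (m + 1) ω)
            - ξ (m + 1) ω ⬝ᵥ N.mulVec (ξ (m + 1) ω) := by
        rw [Matrix.sub_mulVec, Matrix.sub_mulVec, dotProduct_sub,
          dotProduct_sub, Matrix.smul_mulVec, Matrix.one_mulVec,
          dotProduct_smul]
        simp [smul_eq_mul]
      rw [hexp] at h0
      nlinarith [mul_nonneg hε.le hxx]
    linarith [eSum, hmono]
  -- nonnegativity
  have hGnonneg : ∀ m, 0 ≤ G m := by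
    intro m
    simp only [hG]
    exact integral_nonneg fun ω => Finset.sum_nonneg fun i _ => mul_self_nonneg _
  have hVnonneg : ∀ m, 0 ≤ V m := by
    intro m
    simp only [hV]
    refine integral_nonneg fun ω => ?_
    have := hQ.posSemidef.dotProduct_mulVec_nonneg (ξ (m + 1) ω)
    simpa using this
  have hV0 : V 0 = b ⬝ᵥ Q.mulVec b := by
    simp only [hV]
    have : (fun ω => ξ (0 + 1) ω ⬝ᵥ Q.mulVec (ξ (0 + 1) ω)) = fun _ => b ⬝ᵥ Q.mulVec b := by
      funext ω; rw [hξ₁]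
    rw [this, integral_const]
    simp
  have hpartial : ∀ Nn : ℕ, (∑ m ∈ Finset.range Nn, G m) + V Nn ≤ V 0 := by
    intro Nn
    induction Nn with
    | zero => simp
    | succ Nn ih =>
      rw [Finset.sum_range_succ]
      have := key Nn
      linarith
  have hbound : ∀ Nn : ℕ, (∑ m ∈ Finset.range Nn, G m) ≤ b ⬝ᵥ Q.mulVec b := by
    intro Nn
    have := hpartial Nn
    have := hVnonneg Nn
    linarith [hV0 ▸ hpartial Nn]
  exact Real.tsum_le_of_sum_range_le hGnonneg hbound
end
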